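/- Let Z, Z' be zones and α a bound function. Then Z ⊄ Closure_α(Z') if and only if there exist clocks x, y, both different from x₀, such that one of the following holds: (1) Z'_{0x} < Z_{0x} and Z'_{0x} ≤ (≤,α_x); or (2) Z'_{x0} < Z_{x0} and Z_{x0} ≥ (≤,−α_x); or (3) Z_{x0} ≥ (≤,−α_x) and Z'_{xy} < Z_{xy} and Z'_{xy} ≤ (≤,α_y) + ⌊Z_{x0}⌋. -/

import Mathlib

attribute [local instance] Classical.propDecidable

noncomputable section

namespace TAform

/-! ### Weights `(≼, c)` with `c ∈ ℤ ∪ {∞}` -/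

/-- Values in `ℤ ∪ {∞}`: `none` represents `∞`. -/
abbrev OVal := Option ℤ

/-- Addition on `ℤ ∪ {∞}`. -/
def ovAdd : OVal → OVal → OVal
  | some a, some b => some (a + b)
  | _, _ => none

/-- Strict order on `ℤ ∪ {∞}`. -/
def ovLt : OVal → OVal → Prop
  | some a, some b => a < b
  | some _, none => True
  | none, _ => False

/-- A weight `(≼, c)`: `strict = true` means `≼` is `<`, `strict = false` means `≤`;
`val ∈ ℤ ∪ {∞}`. -/
structure Weight where
  strict : Bool
  val : OVal

/-- The weight `(<, ∞)`. -/
def winf : Weight := ⟨true, none⟩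

/-- The weight `(≤, c)`. -/
def wle (c : ℤ) : Weight := ⟨false, some c⟩

/-- The weight `(<, c)`. -/
def wlt (c : ℤ) : Weight := ⟨true, some c⟩

/-- Addition: `(≼₁,c₁)+(≼₂,c₂) = (≼,c₁+c₂)` where `≼` is `<` iff `≼₁` or `≼₂` is `<`. -/
def Weight.add (a b : Weight) : Weight := ⟨a.strict || b.strict, ovAdd a.val b.val⟩

/-- Order: `(≼₁,c₁) < (≼₂,c₂)` iff `c₁ < c₂`, or `c₁ = c₂`, `≼₁` is `<` and `≼₂` is `≤`. -/
def Weight.lt (a b : Weight) : Prop :=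
  ovLt a.val b.val ∨ (a.val = b.val ∧ a.strict = true ∧ b.strict = false)

def Weight.le (a b : Weight) : Prop := Weight.lt a b ∨ a = b

/-- Minus: `−(≼,c) = (≼,−c)`. -/
def Weight.neg (w : Weight) : Weight := ⟨w.strict, Option.map (fun c => -c) w.val⟩

/-- Floor: `⌊(<,c)⌋ = (≤,c−1)` and `⌊(≤,c)⌋ = (≤,c)`. -/
def Weight.floor (w : Weight) : Weight :=
  ⟨false, if w.strict then Option.map (fun c => c - 1) w.val else w.val⟩

/-- Ceiling (on integer-valued weights): `⌈(≤,c)⌉ = (≤,c)` and `⌈(<,c)⌉ = (<,c+1)`. -/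
def Weight.ceil (w : Weight) : Weight :=
  if w.strict then ⟨true, Option.map (fun c => c + 1) w.val⟩ else w

/-- Maximum of two weights. -/
def Weight.max (a b : Weight) : Weight := if Weight.lt a b then b else a

/-- Satisfaction: `d ≼ c` for a real number `d` and a weight `(≼,c)`. -/
def Weight.sat (w : Weight) (d : ℝ) : Prop :=
  match w.val with
  | none => True
  | some c => if w.strict then d < (c : ℝ) else d ≤ (c : ℝ)

/-! ### Distance graphs and their semantics -/

/-- Vertices: clocks of `X` together with the special vertex `x₀` (represented by `none`). -/
abbrev Vtx (X : Type*) := Option X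

/-- A distance graph: a weight for every ordered pair of vertices.  The edge
`a →^{≼ c} b` represents the constraint `v b − v a ≼ c`. -/
abbrev DGraph (X : Type*) := Vtx X → Vtx X → Weight

/-- A clock valuation. -/
abbrev Val (X : Type*) := X → ℝ

/-- The valuation is nonnegative (clock valuations map into `ℝ≥0`). -/
def Nonneg {X : Type*} (v : Val X) : Prop := ∀ x, 0 ≤ v x

/-- Extension of a valuation to all vertices, sending `x₀` to `0`. -/
def extV {X : Type*} (v : Val X) : Vtx X → ℝ
  | none => 0
  | some x => v x

/-- Semantics of a distance graph: the set of nonnegative clock valuations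
(with `x₀ = 0`) satisfying all edge constraints. -/
def sem {X : Type*} (G : DGraph X) : Set (Val X) :=
  { v | Nonneg v ∧ ∀ a b, (G a b).sat (extV v b - extV v a) }

/-- Weight of the path `a :: l ++ [b]` in `G` (sum of the weights of its edges). -/
def pathWeight {X : Type*} (G : DGraph X) : Vtx X → List (Vtx X) → Vtx X → Weight
  | a, [], b => G a b
  | a, c :: l, b => (G a c).add (pathWeight G c l b)

/-- `G` has only positive cycles: no cycle has weight at most `(<,0)`. -/
def OnlyPositiveCycles {X : Type*} (G : DGraph X) : Prop :=
  ∀ (a : Vtx X) (l : List (Vtx X)), ¬ (pathWeight G a l a).le (wlt 0)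

/-- Canonical form: the weight of the edge from `a` to `b` is a lower bound of the
weights of all paths from `a` to `b`. -/
def PathCanonical {X : Type*} (G : DGraph X) : Prop :=
  ∀ (a b : Vtx X) (l : List (Vtx X)), (G a b).le (pathWeight G a l b)

/-- The weight `w` bounds the difference `v b − v a` over all `v ∈ S`. -/
def Bounds {X : Type*} (S : Set (Val X)) (a b : Vtx X) (w : Weight) : Prop :=
  ∀ v ∈ S, w.sat (extV v b - extV v a)

/-- `G` is the canonical distance graph of the set `S`: it represents `S` and each of
its edge weights is the least weight bounding the corresponding difference over `S`
(equivalently, for sets defined by clock constraints, the lower bound of the weights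
of paths between its endpoints). -/
def IsCanonGraph {X : Type*} (G : DGraph X) (S : Set (Val X)) : Prop :=
  sem G = S ∧ ∀ a b w, Bounds S a b w → (G a b).le w

/-- A zone: a set of valuations defined by a conjunction of constraints of the form
`x − y # c` or `x # c`, i.e. the set represented by some distance graph. -/
def IsZone {X : Type*} (Z : Set (Val X)) : Prop := ∃ G : DGraph X, sem G = Z

/-! ### Regions and closure -/

/-- Region equivalence with respect to the bound function `α`: same integer parts
(or both above the bound), same set of clocks with zero fractional part, and the
same ordering of fractional parts of bounded clocks. -/
def regEq {X : Type*} (α : X → ℕ) (v w : Val X) : Prop :=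
  (∀ x, ((α x : ℝ) < v x ∧ (α x : ℝ) < w x) ∨
    (⌊v x⌋ = ⌊w x⌋ ∧ (Int.fract (v x) = 0 ↔ Int.fract (w x) = 0))) ∧
  (∀ x y, v x ≤ (α x : ℝ) → v y ≤ (α y : ℝ) →
    (Int.fract (v x) ≤ Int.fract (v y) ↔ Int.fract (w x) ≤ Int.fract (w y)))

/-- A region with respect to `α`: an equivalence class of region equivalence
(inside the nonnegative valuations). -/
def IsRegion {X : Type*} (α : X → ℕ) (R : Set (Val X)) : Prop :=
  ∃ v : Val X, Nonneg v ∧ R = { w | Nonneg w ∧ regEq α v w }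

/-- Closure abstraction: the union of the regions (w.r.t. `α`) intersecting `S`. -/
def Closure {X : Type*} (α : X → ℕ) (S : Set (Val X)) : Set (Val X) :=
  ⋃₀ { R | IsRegion α R ∧ (R ∩ S).Nonempty }

/-! ### LU-bounds and the `Extra⁺_LU` extrapolation -/

/-- `w > (≤, l)` where `l ∈ ℕ ∪ {−∞}` (`⊥` is `−∞`). -/
def gtLB (w : Weight) (l : WithBot ℕ) : Prop :=
  ∀ n : ℕ, l = (n : WithBot ℕ) → ovLt (some (n : ℤ)) w.val

/-- `−w > (≤, l)` where `l ∈ ℕ ∪ {−∞}`. -/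
def negGtLB (w : Weight) (l : WithBot ℕ) : Prop :=
  ∃ c : ℤ, w.val = some c ∧ ∀ n : ℕ, l = (n : WithBot ℕ) → c < -(n : ℤ)

/-- The weight `(<, −u)` for `u ∈ ℕ ∪ {−∞}` (with `(<,∞)` when `u = −∞`). -/
def wltNeg (u : WithBot ℕ) : Weight :=
  ⟨true, WithBot.recBotCoe none (fun n => some (-(n : ℤ))) u⟩

/-- The `Extra⁺_{LU}` extrapolation, applied edgewise to a distance graph `G`
(the canonical graph of a zone): `Z⁺_{xy} = (<,∞)` if `Z_{xy} > (≤,L_y)`, or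
`−Z_{y0} > (≤,L_y)`, or `−Z_{x0} > (≤,U_x)` and `y ≠ x₀`;
`Z⁺_{x0} = (<,−U_x)` if `−Z_{x0} > (≤,U_x)`; and `Z⁺_{xy} = Z_{xy}` otherwise. -/
def extraLU {X : Type*} (L U : X → WithBot ℕ) (G : DGraph X) : DGraph X := fun a b =>
  match a, b with
  | some x, some y =>
      if gtLB (G (some x) (some y)) (L y) ∨ negGtLB (G (some y) none) (L y) ∨
          negGtLB (G (some x) none) (U x)
      then winf else G (some x) (some y)
  | none, some y =>
      if gtLB (G none (some y)) (L y) ∨ negGtLB (G (some y) none) (L y)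
      then winf else G none (some y)
  | some x, none =>
      if negGtLB (G (some x) none) (U x) then wltNeg (U x) else G (some x) none
  | none, none => G none none

/-! ### LU-preorder and its abstraction -/

/-- `l < r` where `l ∈ ℕ ∪ {−∞}` and `r : ℝ`. -/
def lbLtR (l : WithBot ℕ) (r : ℝ) : Prop := ∀ n : ℕ, l = (n : WithBot ℕ) → (n : ℝ) < r

/-- The LU-preorder `ν' ≼_{LU} ν`: for each clock `x`, either `ν' x = ν x`,
or `L x < ν' x < ν x`, or `U x < ν x < ν' x`. -/
def LUpre {X : Type*} (L U : X → WithBot ℕ) (ν' ν : Val X) : Prop :=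
  ∀ x, ν' x = ν x ∨ (lbLtR (L x) (ν' x) ∧ ν' x < ν x) ∨ (lbLtR (U x) (ν x) ∧ ν x < ν' x)

/-- The abstraction `a_{≼LU}(W) = { ν | ∃ ν' ∈ W, ν' ≼_{LU} ν }` (inside the
nonnegative valuations). -/
def aLU {X : Type*} (L U : X → WithBot ℕ) (W : Set (Val X)) : Set (Val X) :=
  { ν | Nonneg ν ∧ ∃ ν' ∈ W, LUpre L U ν' ν }

/-! ### Guards, transitions, timed automata -/

/-- Comparison operators `# ∈ {<, ≤, =, ≥, >}`. -/
inductive Cmp | lt | le | eq | ge | gt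
deriving DecidableEq

/-- Satisfaction of a comparison by real numbers. -/
def Cmp.sat : Cmp → ℝ → ℝ → Prop
  | .lt, a, b => a < b
  | .le, a, b => a ≤ b
  | .eq, a, b => a = b
  | .ge, a, b => a ≥ b
  | .gt, a, b => a > b

/-- A clock constraint (guard): a conjunction (list) of constraints `x # c`, `c ∈ ℕ`. -/
abbrev Guard (X : Type*) := List (X × Cmp × ℕ)

/-- `v ⊨ g`: every conjunct of the guard holds. -/
def gsat {X : Type*} (v : Val X) (g : Guard X) : Prop :=
  ∀ p ∈ g, Cmp.sat p.2.1 (v p.1) (p.2.2 : ℝ)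

/-- `[R]v`: reset the clocks in `R` to `0`, leaving the others unchanged. -/
def resetVal {X : Type*} (R : Set X) (v : Val X) : Val X := Set.indicator Rᶜ v

/-- One step `ν →^{δ,t} ν'` for a transition with guard `g` and reset set `R`:
`ν + δ ⊨ g` and `ν' = [R](ν + δ)`. -/
def step {X : Type*} (g : Guard X) (R : Set X) (δ : ℝ) (ν ν' : Val X) : Prop :=
  0 ≤ δ ∧ gsat (fun x => ν x + δ) g ∧ ν' = resetVal R (fun x => ν x + δ)

/-- `Post(S,t)`: all valuations reachable by the transition from valuations in `S`. -/
def Post {X : Type*} (g : Guard X) (R : Set X) (S : Set (Val X)) : Set (Val X) :=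
  { ν' | ∃ ν ∈ S, ∃ δ : ℝ, step g R δ ν ν' }

/-- A timed automaton `(Q, q₀, X, T, Acc)`. -/
structure TimedAuto (Q X : Type*) where
  init : Q
  trans : Set (Q × Guard X × Set X × Q)
  acc : Set Q

/-- `(q,ν) →^{δ,t} (q',ν')` for a transition `t = (q,g,R,q')` of the automaton. -/
def TimedAuto.cstep {Q X : Type*} (A : TimedAuto Q X) (t : Q × Guard X × Set X × Q)
    (δ : ℝ) (c c' : Q × Val X) : Prop :=
  t ∈ A.trans ∧ c.1 = t.1 ∧ c'.1 = t.2.2.2 ∧ step t.2.1 t.2.2.1 δ c.2 c'.2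

/-! ### Auxiliary lemmas on weights -/

section WeightLemmas

namespace Weight

lemma lt_def (a b : Weight) :
    a.lt b ↔ ovLt a.val b.val ∨ (a.val = b.val ∧ a.strict = true ∧ b.strict = false) :=
  Iff.rfl

lemma ovLt_irrefl (o : OVal) : ¬ ovLt o o := by
  cases o <;> simp [ovLt]

lemma ovLt_trans {a b c : OVal} (h1 : ovLt a b) (h2 : ovLt b c) : ovLt a c := by
  cases a <;> cases b <;> cases c <;> simp_all [ovLt] <;> omega

lemma lt_irrefl (a : Weight) : ¬ a.lt a := by
  rintro (h | ⟨_, h1, h2⟩)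
  · exact ovLt_irrefl _ h
  · rw [h1] at h2; exact Bool.noConfusion h2

lemma lt_trans {a b c : Weight} (h1 : a.lt b) (h2 : b.lt c) : a.lt c := by
  rcases h1 with h1 | ⟨e1, s1, s1'⟩
  · rcases h2 with h2 | ⟨e2, s2, s2'⟩
    · exact Or.inl (ovLt_trans h1 h2)
    · exact Or.inl (e2 ▸ h1)
  · rcases h2 with h2 | ⟨e2, s2, s2'⟩
    · exact Or.inl (e1 ▸ h2)
    · rw [s1'] at s2; exact Bool.noConfusion s2

lemma lt_of_lt_of_le {a b c : Weight} (h1 : a.lt b) (h2 : b.le c) : a.lt c := by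
  rcases h2 with h2 | rfl
  · exact lt_trans h1 h2
  · exact h1

lemma le_trans {a b c : Weight} (h1 : a.le b) (h2 : b.le c) : a.le c := by
  rcases h1 with h1 | rfl
  · exact Or.inl (lt_of_lt_of_le h1 h2)
  · exact h2

lemma lt_asymm {a b : Weight} (h1 : a.lt b) (h2 : b.lt a) : False := by
  exact lt_irrefl a (lt_trans h1 h2)

lemma not_le_of_lt {a b : Weight} (h : a.lt b) : ¬ b.le a := by
  rintro (h' | rfl)
  · exact lt_asymm h h'
  · exact lt_irrefl _ h

lemma le_of_not_lt {a b : Weight} (h : ¬ a.lt b) : b.le a := by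
  obtain ⟨sa, va⟩ := a
  obtain ⟨sb, vb⟩ := b
  cases va with
  | none =>
    cases vb with
    | none =>
      cases sa <;> cases sb <;> simp_all [Weight.lt, Weight.le, ovLt]
    | some m => exact Or.inl (Or.inl trivial)
  | some n =>
    cases vb with
    | none => exact absurd (Or.inl trivial) h
    | some m =>
      rcases lt_trichotomy n m with hc | hc | hc
      · exact absurd (Or.inl hc) h
      · subst hc
        cases sa <;> cases sb <;> simp_all [Weight.lt, Weight.le, ovLt]
      · exact Or.inl (Or.inl hc)

lemma le_finite_cases {a : Weight} {s : Bool} {n : ℤ} (h : a.le ⟨s, some n⟩) :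
    ∃ (sa : Bool) (m : ℤ), a = ⟨sa, some m⟩ ∧
      (m < n ∨ (m = n ∧ sa = true ∧ s = false) ∨ (m = n ∧ sa = s)) := by
  obtain ⟨sa, va⟩ := a
  rcases h with (h | ⟨h1, h2, h3⟩) | h
  · cases va with
    | none => exact absurd h (by simp [ovLt])
    | some m => exact ⟨sa, m, rfl, Or.inl h⟩
  · simp only at h1
    subst h1
    exact ⟨sa, n, rfl, Or.inr (Or.inl ⟨rfl, h2, h3⟩)⟩
  · injection h with h1 h2
    subst h1; subst h2
    exact ⟨_, n, rfl, Or.inr (Or.inr ⟨rfl, rfl⟩)⟩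

lemma le_val_le {a : Weight} {s : Bool} {n : ℤ} (h : a.le ⟨s, some n⟩) :
    ∃ (sa : Bool) (m : ℤ), a = ⟨sa, some m⟩ ∧ m ≤ n := by
  obtain ⟨sa, m, rfl, hc⟩ := le_finite_cases h
  exact ⟨sa, m, rfl, by rcases hc with h | ⟨h, _⟩ | ⟨h, _⟩ <;> omega⟩

lemma sat_some {s : Bool} {n : ℤ} {d : ℝ} :
    Weight.sat ⟨s, some n⟩ d ↔ (if s then d < (n : ℝ) else d ≤ (n : ℝ)) := Iff.rfl

lemma sat_none {s : Bool} {d : ℝ} : Weight.sat ⟨s, none⟩ d := trivial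

lemma sat_le {s : Bool} {n : ℤ} {d : ℝ} (h : Weight.sat ⟨s, some n⟩ d) : d ≤ (n : ℝ) := by
  rw [sat_some] at h
  cases s <;> simp at h <;> linarith

lemma sat_mono {a b : Weight} {d : ℝ} (hab : a.le b) (h : a.sat d) : b.sat d := by
  obtain ⟨sb, vb⟩ := b
  cases vb with
  | none => exact sat_none
  | some n =>
    obtain ⟨sa, m, rfl, hc⟩ := le_finite_cases hab
    rw [sat_some] at h ⊢
    have hdm : d ≤ (m : ℝ) := by cases sa <;> simp_all <;> linarith
    rcases hc with h' | ⟨h', h2, h3⟩ | ⟨h', h2⟩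
    · have hmn : (m : ℝ) < n := by exact_mod_cast h'
      cases sb <;> simp <;> linarith
    · subst h'; subst h3
      have : d < (m : ℝ) := by simp_all
      simp; linarith
    · subst h'; subst h2
      exact h

lemma sat_add {a b : Weight} {d e : ℝ} (ha : a.sat d) (hb : b.sat e) :
    (a.add b).sat (d + e) := by
  obtain ⟨sa, va⟩ := a
  obtain ⟨sb, vb⟩ := b
  cases va with
  | none => exact sat_none
  | some m =>
    cases vb with
    | none => exact sat_none
    | some n =>
      show Weight.sat ⟨sa || sb, some (m + n)⟩ _
      rw [sat_some]
      rw [sat_some] at ha hb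
      cases sa <;> cases sb <;> simp_all <;> push_cast <;> linarith

end Weight

end WeightLemmas

section MoreWeight

namespace Weight

lemma sat_iff' {w : Weight} {k : ℤ} (h : w.val = some k) (d : ℝ) :
    w.sat d ↔ (if w.strict then d < (k : ℝ) else d ≤ (k : ℝ)) := by
  obtain ⟨s, v⟩ := w
  simp only at h
  subst h
  rfl

lemma sat_of_val_none {w : Weight} (h : w.val = none) (d : ℝ) : w.sat d := by
  obtain ⟨s, v⟩ := w
  simp only at h
  subst h
  trivial

lemma sat_of_lt {w : Weight} {k : ℤ} (h : w.val = some k) {d : ℝ} (hd : d < (k : ℝ)) :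
    w.sat d := by
  rw [sat_iff' h]
  split <;> linarith

lemma sat_of_le_nonstrict {w : Weight} {k : ℤ} (h : w.val = some k)
    (hs : w.strict = false) {d : ℝ} (hd : d ≤ (k : ℝ)) : w.sat d := by
  rw [sat_iff' h, hs]
  simpa using hd

lemma sat_le' {w : Weight} {k : ℤ} (h : w.val = some k) {d : ℝ} (hd : w.sat d) :
    d ≤ (k : ℝ) := by
  rw [sat_iff' h] at hd
  split at hd <;> linarith

lemma sat_lt_of_strict {w : Weight} {k : ℤ} (h : w.val = some k)
    (hs : w.strict = true) {d : ℝ} (hd : w.sat d) : d < (k : ℝ) := by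
  rw [sat_iff' h, hs] at hd
  simpa using hd

lemma add_val {a b : Weight} {m n : ℤ} (ha : a.val = some m) (hb : b.val = some n) :
    (a.add b).val = some (m + n) := by
  show ovAdd a.val b.val = _
  rw [ha, hb]
  rfl

lemma add_strict (a b : Weight) : (a.add b).strict = (a.strict || b.strict) := rfl

end Weight

end MoreWeight

section MoreWeight2

namespace Weight

lemma lt_of_not_le {a b : Weight} (h : ¬ a.le b) : b.lt a := by
  have h1 : ¬ a.lt b := fun h' => h (Or.inl h')
  rcases le_of_not_lt h1 with h' | h'
  · exact h'
  · exact absurd (Or.inr h'.symm) h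

lemma lt_from_nonstrict {n : ℤ} {b : Weight} (h : Weight.lt ⟨false, some n⟩ b)
    {k : ℤ} (hk : b.val = some k) : n < k := by
  rcases h with h | ⟨_, h2, _⟩
  · rw [hk] at h; exact h
  · exact Bool.noConfusion h2

lemma lt_to_nonstrict {n : ℤ} {a : Weight} (h : Weight.lt a ⟨false, some n⟩)
    {m : ℤ} (hm : a.val = some m) : m < n ∨ (m = n ∧ a.strict = true) := by
  rcases h with h | ⟨h1, h2, _⟩
  · rw [hm] at h; exact Or.inl h
  · rw [hm] at h1
    exact Or.inr ⟨Option.some.injEq .. ▸ h1, h2⟩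

end Weight

end MoreWeight2

lemma Weight.eq_mk_of_val {w : Weight} {k : ℤ} (h : w.val = some k) :
    w = ⟨w.strict, some k⟩ := by
  obtain ⟨s, vv⟩ := w
  simp only at h
  subst h
  rfl

section MoreWeight3

namespace Weight

lemma not_sat_strict {w : Weight} {k : ℤ} (h : w.val = some k) (hs : w.strict = true)
    {d : ℝ} (hns : ¬ w.sat d) : (k : ℝ) ≤ d := by
  rw [sat_iff' h, hs] at hns
  simp at hns
  linarith

lemma not_sat_nonstrict {w : Weight} {k : ℤ} (h : w.val = some k) (hs : w.strict = false)
    {d : ℝ} (hns : ¬ w.sat d) : (k : ℝ) < d := by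
  rw [sat_iff' h, hs] at hns
  simp at hns
  linarith

lemma max_lt_of {a b c : Weight} (ha : a.lt c) (hb : b.lt c) : (Weight.max a b).lt c := by
  unfold Weight.max
  split <;> assumption

lemma le_max_left (a b : Weight) : a.le (Weight.max a b) := by
  unfold Weight.max
  split
  · exact Or.inl (by assumption)
  · exact Or.inr rfl

lemma le_max_right (a b : Weight) : b.le (Weight.max a b) := by
  unfold Weight.max
  split
  · exact Or.inr rfl
  · exact le_of_not_lt (by assumption)

lemma lt_val_some {a b : Weight} (h : a.lt b) {k : ℤ} (hb : b.val = some k) :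
    ∃ (sa : Bool) (m : ℤ), a = ⟨sa, some m⟩ ∧ m ≤ k := by
  rcases h with h | ⟨h1, _, _⟩
  · rw [hb] at h
    obtain ⟨sa, _ | m⟩ := a
    · exact absurd h (by simp [ovLt])
    · exact ⟨sa, m, rfl, le_of_lt h⟩
  · rw [hb] at h1
    obtain ⟨sa, va⟩ := a
    simp only at h1
    subst h1
    exact ⟨sa, k, rfl, le_refl k⟩

end Weight

end MoreWeight3
/-! ### Basic facts about canonical distance graphs -/

section CanonFacts

variable {X : Type*} {G : DGraph X} {Z : Set (Val X)}

lemma canon_sat (hG : IsCanonGraph G Z) {v : Val X} (hv : v ∈ Z) :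
    ∀ a b, (G a b).sat (extV v b - extV v a) := by
  rw [← hG.1] at hv; exact hv.2

lemma canon_nonneg (hG : IsCanonGraph G Z) {v : Val X} (hv : v ∈ Z) : Nonneg v := by
  rw [← hG.1] at hv; exact hv.1

lemma canon_nonempty (hG : IsCanonGraph G Z) : Z.Nonempty := by
  by_contra h
  rw [Set.not_nonempty_iff_eq_empty] at h
  subst h
  rcases hval : (G none none).val with _ | m
  · have := hG.2 none none (wlt 0) (fun v hv => absurd hv (Set.notMem_empty v))
    rcases this with (hlt | ⟨h1, _, _⟩) | heq
    · rw [hval] at hlt; exact hlt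
    · rw [hval] at h1; simp [wlt] at h1
    · rw [heq] at hval; simp [wlt] at hval
  · have := hG.2 none none (wlt (m - 1)) (fun v hv => absurd hv (Set.notMem_empty v))
    rcases this with (hlt | ⟨h1, _, h3⟩) | heq
    · rw [hval] at hlt; simp [wlt, ovLt] at hlt; omega
    · simp [wlt] at h3
    · rw [heq] at hval; simp [wlt] at hval

lemma canon_tri (hG : IsCanonGraph G Z) (a b c : Vtx X) :
    (G a b).le ((G a c).add (G c b)) := by
  apply hG.2
  intro v hv
  have h1 := canon_sat hG hv a c
  have h2 := canon_sat hG hv c b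
  have := Weight.sat_add h1 h2
  have heq : extV v c - extV v a + (extV v b - extV v c) = extV v b - extV v a := by ring
  rwa [heq] at this

lemma canon_diag (hG : IsCanonGraph G Z) (a : Vtx X) : (G a a).sat 0 := by
  obtain ⟨v, hv⟩ := canon_nonempty hG
  have := canon_sat hG hv a a
  rwa [sub_self] at this

lemma canon_z0_le (hG : IsCanonGraph G Z) (z : X) : (G (some z) none).le (wle 0) := by
  apply hG.2
  intro v hv
  show Weight.sat ⟨false, some 0⟩ _
  rw [Weight.sat_some]
  have := canon_nonneg hG hv z
  simp [extV]
  linarith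

lemma canon_z0_finite (hG : IsCanonGraph G Z) (z : X) :
    ∃ (s : Bool) (c : ℤ), G (some z) none = ⟨s, some c⟩ := by
  obtain ⟨s, c, h, _⟩ := Weight.le_val_le (canon_z0_le hG z)
  exact ⟨s, c, h⟩

lemma canon_inf_strict (hG : IsCanonGraph G Z) {a b : Vtx X}
    (h : (G a b).val = none) : (G a b).strict = true := by
  have hle : (G a b).le winf := by
    apply hG.2
    intro v hv
    exact trivial
  rcases hle with (hlt | ⟨_, h2, _⟩) | heq
  · rw [h] at hlt; exact absurd hlt (by simp [winf, ovLt])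
  · exact h2
  · rw [heq]; rfl

lemma canon_violator (hG : IsCanonGraph G Z) {a b : Vtx X} {w : Weight}
    (h : w.lt (G a b)) : ∃ v ∈ Z, ¬ w.sat (extV v b - extV v a) := by
  by_contra hc
  push_neg at hc
  exact Weight.not_le_of_lt h (hG.2 a b w hc)

/-- If the edge `a → b` is finite then so is `a → c` whenever `c → b` is finite. -/
lemma canon_finite_step (hG : IsCanonGraph G Z) {a b c : Vtx X} {s₁ s₂ : Bool} {k₁ k₂ : ℤ}
    (h1 : G a c = ⟨s₁, some k₁⟩) (h2 : G c b = ⟨s₂, some k₂⟩) :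
    ∃ (s : Bool) (m : ℤ), G a b = ⟨s, some m⟩ ∧ m ≤ k₁ + k₂ := by
  have := canon_tri hG a b c
  rw [h1, h2] at this
  exact Weight.le_val_le this

end CanonFacts
/-! ### Region equivalence lemmas -/

section RegionFacts

variable {X : Type*} {α : X → ℕ}

/-- Real core: equal floors and simultaneous-zero fractional parts transfer
integer upper bounds. -/
lemma floor_transfer_le {a b : ℝ} {m : ℤ} (hf : ⌊a⌋ = ⌊b⌋)
    (hz : Int.fract a = 0 ↔ Int.fract b = 0) (h : a ≤ m) : b ≤ m := by
  rcases eq_or_lt_of_le h with h | h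
  · have hza : Int.fract a = 0 := by rw [h]; exact_mod_cast Int.fract_intCast m
    have hzb := hz.1 hza
    have hb : b = ⌊b⌋ := by
      have := Int.fract_add_floor b
      rw [hzb] at this; simpa using this.symm
    have ha : a = ⌊a⌋ := by
      have := Int.fract_add_floor a
      rw [hza] at this; simpa using this.symm
    rw [hb, ← hf, ← ha, ← h]
  · have hfa : ⌊a⌋ < m := Int.floor_lt.2 h
    have : b < ⌊b⌋ + 1 := Int.lt_floor_add_one b
    have : b < m := by
      rw [← hf] at this
      have : b < (⌊a⌋ : ℝ) + 1 := this
      have h2 : (⌊a⌋ : ℝ) + 1 ≤ m := by exact_mod_cast hfa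
      linarith
    linarith

lemma floor_transfer_lt {a b : ℝ} {m : ℤ} (hf : ⌊a⌋ = ⌊b⌋)
    (hz : Int.fract a = 0 ↔ Int.fract b = 0) (h : a < m) : b < m := by
  have hfa : ⌊a⌋ < m := Int.floor_lt.2 h
  have : b < ⌊b⌋ + 1 := Int.lt_floor_add_one b
  rw [← hf] at this
  have h2 : (⌊a⌋ : ℝ) + 1 ≤ m := by exact_mod_cast hfa
  linarith

lemma regEq_floor {v w : Val X} (h : regEq α v w) {x : X} (hv : v x ≤ (α x : ℝ)) :
    ⌊v x⌋ = ⌊w x⌋ ∧ (Int.fract (v x) = 0 ↔ Int.fract (w x) = 0) := by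
  rcases h.1 x with ⟨h1, _⟩ | h2
  · linarith
  · exact h2

lemma regEq_bd {v w : Val X} (h : regEq α v w) {x : X} (hv : v x ≤ (α x : ℝ)) :
    w x ≤ (α x : ℝ) := by
  obtain ⟨hf, hz⟩ := regEq_floor h hv
  have := floor_transfer_le hf hz (by exact_mod_cast hv : v x ≤ ((α x : ℤ) : ℝ))
  exact_mod_cast this

lemma regEq_above {v w : Val X} (h : regEq α v w) {x : X} (hv : (α x : ℝ) < v x) :
    (α x : ℝ) < w x := by
  rcases h.1 x with ⟨_, h2⟩ | ⟨hf, hz⟩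
  · exact h2
  · by_contra hc
    push_neg at hc
    have := floor_transfer_le hf.symm (Iff.symm hz)
      (by exact_mod_cast hc : w x ≤ ((α x : ℤ) : ℝ))
    have : v x ≤ (α x : ℝ) := by exact_mod_cast this
    linarith

lemma regEq_refl (v : Val X) : regEq α v v :=
  ⟨fun x => Or.inr ⟨rfl, Iff.rfl⟩, fun _ _ _ _ => Iff.rfl⟩

lemma regEq_symm {v w : Val X} (h : regEq α v w) : regEq α w v := by
  constructor
  · intro x
    rcases h.1 x with ⟨h1, h2⟩ | ⟨hf, hz⟩
    · exact Or.inl ⟨h2, h1⟩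
    · exact Or.inr ⟨hf.symm, hz.symm⟩
  · intro x y hx hy
    have hx' : v x ≤ (α x : ℝ) := by
      by_contra hc; push_neg at hc
      exact absurd (regEq_above h hc) (by linarith)
    have hy' : v y ≤ (α y : ℝ) := by
      by_contra hc; push_neg at hc
      exact absurd (regEq_above h hc) (by linarith)
    exact (h.2 x y hx' hy').symm

lemma regEq_trans {u v w : Val X} (h1 : regEq α u v) (h2 : regEq α v w) :
    regEq α u w := by
  constructor
  · intro x
    by_cases hx : u x ≤ (α x : ℝ)
    · have hvx : v x ≤ (α x : ℝ) := regEq_bd h1 hx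
      obtain ⟨f1, z1⟩ := regEq_floor h1 hx
      obtain ⟨f2, z2⟩ := regEq_floor h2 hvx
      exact Or.inr ⟨f1.trans f2, z1.trans z2⟩
    · push_neg at hx
      exact Or.inl ⟨hx, regEq_above h2 (regEq_above h1 hx)⟩
  · intro x y hx hy
    have hvx : v x ≤ (α x : ℝ) := regEq_bd h1 hx
    have hvy : v y ≤ (α y : ℝ) := regEq_bd h1 hy
    exact (h1.2 x y hx hy).trans (h2.2 x y hvx hvy)

/-- Single-coordinate transfer of integer bounds across region equivalence. -/
lemma regEq_T1 {v u : Val X} (h : regEq α v u) {x : X} (hv : v x ≤ (α x : ℝ)) (m : ℤ) :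
    (v x < m → u x < m) ∧ (v x ≤ m → u x ≤ m) := by
  obtain ⟨hf, hz⟩ := regEq_floor h hv
  exact ⟨floor_transfer_lt hf hz, floor_transfer_le hf hz⟩

/-- Real core for difference transfer. -/
lemma diff_lt_iff (a b : ℝ) (m : ℤ) :
    a - b < m ↔ (⌊a⌋ - ⌊b⌋ < m ∨ (⌊a⌋ - ⌊b⌋ = m ∧ Int.fract a < Int.fract b)) := by
  have ha := Int.fract_add_floor a
  have hb := Int.fract_add_floor b
  have ha0 := Int.fract_nonneg a
  have hb0 := Int.fract_nonneg b
  have ha1 := Int.fract_lt_one a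
  have hb1 := Int.fract_lt_one b
  constructor
  · intro h
    rcases lt_trichotomy (⌊a⌋ - ⌊b⌋) m with hc | hc | hc
    · exact Or.inl hc
    · refine Or.inr ⟨hc, ?_⟩
      by_contra hcc; push_neg at hcc
      have : ((⌊a⌋ : ℝ) - ⌊b⌋) ≤ a - b := by linarith [ha, hb]
      have hm : ((⌊a⌋ : ℝ) - ⌊b⌋) = m := by exact_mod_cast hc
      linarith
    · have : (m : ℝ) + 1 ≤ (⌊a⌋ : ℝ) - ⌊b⌋ := by exact_mod_cast hc
      linarith [ha, hb]
  · rintro (hc | ⟨hc, hfr⟩)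
    · have : (⌊a⌋ : ℝ) - ⌊b⌋ + 1 ≤ m := by exact_mod_cast hc
      linarith [ha, hb]
    · have : (⌊a⌋ : ℝ) - ⌊b⌋ = m := by exact_mod_cast hc
      linarith [ha, hb]

lemma diff_le_iff (a b : ℝ) (m : ℤ) :
    a - b ≤ m ↔ (⌊a⌋ - ⌊b⌋ < m ∨ (⌊a⌋ - ⌊b⌋ = m ∧ Int.fract a ≤ Int.fract b)) := by
  have ha := Int.fract_add_floor a
  have hb := Int.fract_add_floor b
  have ha0 := Int.fract_nonneg a
  have hb0 := Int.fract_nonneg b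
  have ha1 := Int.fract_lt_one a
  have hb1 := Int.fract_lt_one b
  constructor
  · intro h
    rcases lt_trichotomy (⌊a⌋ - ⌊b⌋) m with hc | hc | hc
    · exact Or.inl hc
    · refine Or.inr ⟨hc, ?_⟩
      by_contra hcc; push_neg at hcc
      have hm : ((⌊a⌋ : ℝ) - ⌊b⌋) = m := by exact_mod_cast hc
      linarith
    · have : (m : ℝ) + 1 ≤ (⌊a⌋ : ℝ) - ⌊b⌋ := by exact_mod_cast hc
      linarith
  · rintro (hc | ⟨hc, hfr⟩)
    · have : (⌊a⌋ : ℝ) - ⌊b⌋ + 1 ≤ m := by exact_mod_cast hc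
      linarith
    · have : (⌊a⌋ : ℝ) - ⌊b⌋ = m := by exact_mod_cast hc
      linarith

/-- Difference transfer across region equivalence (both coordinates bounded). -/
lemma regEq_T2 {v u : Val X} (h : regEq α v u) {x y : X}
    (hx : v x ≤ (α x : ℝ)) (hy : v y ≤ (α y : ℝ)) (m : ℤ) :
    (v y - v x < m → u y - u x < m) ∧ (v y - v x ≤ m → u y - u x ≤ m) := by
  obtain ⟨hfx, hzx⟩ := regEq_floor h hx
  obtain ⟨hfy, hzy⟩ := regEq_floor h hy
  have hle : Int.fract (v x) ≤ Int.fract (v y) ↔ Int.fract (u x) ≤ Int.fract (u y) :=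
    h.2 x y hx hy
  have hle' : Int.fract (v y) ≤ Int.fract (v x) ↔ Int.fract (u y) ≤ Int.fract (u x) :=
    h.2 y x hy hx
  constructor
  · intro hd
    rw [diff_lt_iff] at hd ⊢
    rcases hd with hd | ⟨hd, hfr⟩
    · exact Or.inl (by rw [← hfx, ← hfy]; exact hd)
    · refine Or.inr ⟨by rw [← hfx, ← hfy]; exact hd, ?_⟩
      have : ¬ Int.fract (v x) ≤ Int.fract (v y) := by linarith
      have := (not_iff_not.2 hle).1 this
      linarith [this, le_of_lt hfr]
  · intro hd
    rw [diff_le_iff] at hd ⊢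
    rcases hd with hd | ⟨hd, hfr⟩
    · exact Or.inl (by rw [← hfx, ← hfy]; exact hd)
    · exact Or.inr ⟨by rw [← hfx, ← hfy]; exact hd, hle'.1 hfr⟩

/-- Membership in the closure. -/
lemma mem_Closure_iff {v : Val X} {S : Set (Val X)} (hv : Nonneg v) :
    v ∈ Closure α S ↔ ∃ u ∈ S, Nonneg u ∧ regEq α v u := by
  constructor
  · rintro ⟨R, ⟨⟨v₀, hv₀, rfl⟩, ⟨u, ⟨⟨huN, hu⟩, huS⟩⟩⟩, hvN, hvR⟩
    exact ⟨u, huS, huN, regEq_trans (regEq_symm hvR) hu⟩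
  · rintro ⟨u, huS, huN, hvu⟩
    refine ⟨{ w | Nonneg w ∧ regEq α v w }, ⟨⟨v, hv, rfl⟩, ⟨u, ⟨⟨huN, hvu⟩, huS⟩⟩⟩,
      hv, regEq_refl v⟩

end RegionFacts
/-! ### Placing a new vertex consistently with a partial solution -/

section Place

variable {X : Type*} [Fintype X]

lemma pair_key {W : DGraph X} {P : Finset (Vtx X)} {r : Vtx X → ℝ} {z : Vtx X}
    (Hpair : ∀ a ∈ P, ∀ b ∈ P, (W a b).sat (r b - r a))
    (Htri : ∀ a ∈ P, ∀ b ∈ P, (W a b).le ((W a z).add (W z b)))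
    {a b : Vtx X} (ha : a ∈ P) (hb : b ∈ P) {k₁ k₂ : ℤ}
    (h1 : (W b z).val = some k₁) (h2 : (W z a).val = some k₂) :
    r a - (k₂ : ℝ) ≤ r b + (k₁ : ℝ) ∧
      (r a - (k₂ : ℝ) = r b + (k₁ : ℝ) →
        (W z a).strict = false ∧ (W b z).strict = false) := by
  have hsum : (W b z).add (W z a) = ⟨(W b z).strict || (W z a).strict, some (k₁ + k₂)⟩ := by
    unfold Weight.add
    rw [h1, h2]
    rfl
  have hle := Htri b hb a ha
  rw [hsum] at hle
  obtain ⟨sa, m, hba, hc⟩ := Weight.le_finite_cases hle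
  have hsat := Hpair b hb a ha
  rw [hba] at hsat
  have hsatle : r a - r b ≤ (m : ℝ) := Weight.sat_le' rfl hsat
  have hm : m ≤ k₁ + k₂ := by rcases hc with h | ⟨h, _⟩ | ⟨h, _⟩ <;> omega
  have hmR : (m : ℝ) ≤ (k₁ : ℝ) + k₂ := by exact_mod_cast hm
  constructor
  · linarith
  · intro heq
    have h1' : r a - r b = (k₁ : ℝ) + k₂ := by linarith
    have h2' : ((k₁ + k₂ : ℤ) : ℝ) ≤ (m : ℝ) := by push_cast; linarith
    have hm' : m = k₁ + k₂ := le_antisymm hm (by exact_mod_cast h2')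
    have hsa : sa = false := by
      by_contra hsa
      rw [Bool.not_eq_false] at hsa
      have := Weight.sat_lt_of_strict rfl hsa hsat
      rw [h1'] at this
      push_cast at this
      linarith [this]
    rcases hc with h | ⟨h, h', _⟩ | ⟨h, h'⟩
    · omega
    · rw [hsa] at h'; exact Bool.noConfusion h'
    · rw [hsa] at h'
      constructor
      · cases hzs : (W z a).strict
        · rfl
        · rw [hzs] at h'; simp at h'
      · cases hbs : (W b z).strict
        · rfl
        · rw [hbs] at h'; simp at h'

lemma place (W : DGraph X) (P : Finset (Vtx X)) (r : Vtx X → ℝ) (z : Vtx X)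
    (Hpair : ∀ a ∈ P, ∀ b ∈ P, (W a b).sat (r b - r a))
    (Htri : ∀ a ∈ P, ∀ b ∈ P, (W a b).le ((W a z).add (W z b)))
    (Λ : Finset ℝ)
    (HΛ : ∀ l ∈ Λ, ∀ a ∈ P, ∀ k : ℤ, (W a z).val = some k → l < r a + k) :
    ∃ t : ℝ,
      (∀ l ∈ Λ, l < t) ∧
      (∀ a ∈ P, (W a z).sat (t - r a) ∧ (W z a).sat (r a - t)) ∧
      (∀ b ∈ P, ∀ k : ℤ, (W b z).val = some k →
        (∀ b' ∈ P, ∀ k' : ℤ, (W b' z).val = some k' → r b + (k : ℝ) ≤ r b' + (k' : ℝ)) →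
        r b + (k : ℝ) - 1 < t) ∧
      (∀ b ∈ P, ∀ k : ℤ, (W b z).strict = false → (W b z).val = some k →
        (∀ b' ∈ P, ∀ k' : ℤ, (W b' z).val = some k' →
          (r b + (k : ℝ) < r b' + (k' : ℝ) ∨
            (r b + (k : ℝ) = r b' + (k' : ℝ) ∧ (W b' z).strict = false))) →
        r b + (k : ℝ) ≤ t) := by
  classical
  set Ups : Finset (Vtx X) := P.filter (fun a => ((W a z).val).isSome) with hUps
  set Los : Finset (Vtx X) := P.filter (fun a => ((W z a).val).isSome) with hLos
  set uval : Vtx X → ℝ := fun a => r a + ((((W a z).val).getD 0 : ℤ) : ℝ) with huval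
  set lval : Vtx X → ℝ := fun a => r a - ((((W z a).val).getD 0 : ℤ) : ℝ) with hlval
  have huval_eq : ∀ {a : Vtx X} {k : ℤ}, (W a z).val = some k → uval a = r a + (k : ℝ) := by
    intro a k h
    simp [huval, h]
  have hlval_eq : ∀ {a : Vtx X} {k : ℤ}, (W z a).val = some k → lval a = r a - (k : ℝ) := by
    intro a k h
    simp [hlval, h]
  have memUps : ∀ {a : Vtx X}, a ∈ Ups ↔ a ∈ P ∧ ∃ k : ℤ, (W a z).val = some k := by
    intro a
    simp [hUps, Finset.mem_filter, Option.isSome_iff_exists]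
  have memLos : ∀ {a : Vtx X}, a ∈ Los ↔ a ∈ P ∧ ∃ k : ℤ, (W z a).val = some k := by
    intro a
    simp [hLos, Finset.mem_filter, Option.isSome_iff_exists]
  -- key inequalities
  have K1 : ∀ a ∈ Los, ∀ b ∈ Ups, lval a ≤ uval b := by
    intro a ha b hb
    obtain ⟨haP, k₂, h2⟩ := memLos.mp ha
    obtain ⟨hbP, k₁, h1⟩ := memUps.mp hb
    rw [hlval_eq h2, huval_eq h1]
    exact (pair_key Hpair Htri haP hbP h1 h2).1
  have K2 : ∀ a ∈ Los, ∀ b ∈ Ups, lval a = uval b →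
      (W z a).strict = false ∧ (W b z).strict = false := by
    intro a ha b hb heq
    obtain ⟨haP, k₂, h2⟩ := memLos.mp ha
    obtain ⟨hbP, k₁, h1⟩ := memUps.mp hb
    rw [hlval_eq h2, huval_eq h1] at heq
    exact (pair_key Hpair Htri haP hbP h1 h2).2 heq
  set S : Finset ℝ := Λ ∪ Los.image lval with hS
  have memS_lt : ∀ {c : ℝ}, (∀ e ∈ S, e < c) ↔ ((∀ l ∈ Λ, l < c) ∧ ∀ a ∈ Los, lval a < c) := by
    intro c
    constructor
    · intro h
      exact ⟨fun l hl => h l (Finset.mem_union_left _ hl),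
        fun a ha => h _ (Finset.mem_union_right _ (Finset.mem_image_of_mem _ ha))⟩
    · rintro ⟨h1, h2⟩ e he
      rcases Finset.mem_union.mp he with he | he
      · exact h1 e he
      · obtain ⟨a, ha, rfl⟩ := Finset.mem_image.mp he
        exact h2 a ha
  -- general sufficient condition for satisfying all constraints
  have main : ∀ t : ℝ,
      (∀ b ∈ Ups, t < uval b ∨ (t ≤ uval b ∧ (W b z).strict = false)) →
      (∀ a ∈ Los, lval a < t ∨ (lval a ≤ t ∧ (W z a).strict = false)) →
      (∀ a ∈ P, (W a z).sat (t - r a) ∧ (W z a).sat (r a - t)) := by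
    intro t hup hlo a haP
    constructor
    · rcases hval : (W a z).val with _ | k
      · exact Weight.sat_of_val_none hval _
      · have haU : a ∈ Ups := memUps.mpr ⟨haP, k, hval⟩
        rcases hup a haU with h | ⟨h, hs⟩
        · exact Weight.sat_of_lt hval (by rw [huval_eq hval] at h; linarith)
        · exact Weight.sat_of_le_nonstrict hval hs (by rw [huval_eq hval] at h; linarith)
    · rcases hval : (W z a).val with _ | k
      · exact Weight.sat_of_val_none hval _
      · have haL : a ∈ Los := memLos.mpr ⟨haP, k, hval⟩
        rcases hlo a haL with h | ⟨h, hs⟩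
        · exact Weight.sat_of_lt hval (by rw [hlval_eq hval] at h; linarith)
        · exact Weight.sat_of_le_nonstrict hval hs (by rw [hlval_eq hval] at h; linarith)
  by_cases hUne : Ups.Nonempty
  · -- there is at least one upper bound
    have hImg : (Ups.image uval).Nonempty := hUne.image uval
    set T : ℝ := (Ups.image uval).min' hImg with hT
    have Tle : ∀ b ∈ Ups, T ≤ uval b := fun b hb =>
      Finset.min'_le _ _ (Finset.mem_image_of_mem _ hb)
    obtain ⟨b₀, hb₀, hTb₀⟩ : ∃ b₀ ∈ Ups, uval b₀ = T := by
      obtain ⟨b₀, hb₀, h⟩ := Finset.mem_image.mp (Finset.min'_mem (Ups.image uval) hImg)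
      exact ⟨b₀, hb₀, h⟩
    have hΛT : ∀ l ∈ Λ, l < T := by
      intro l hl
      obtain ⟨hb₀P, k₀, h0⟩ := memUps.mp hb₀
      have := HΛ l hl b₀ hb₀P k₀ h0
      rw [← huval_eq h0, hTb₀] at this
      exact this
    have hLosT : ∀ a ∈ Los, lval a ≤ T := fun a ha => le_of_le_of_eq (K1 a ha b₀ hb₀) hTb₀
    -- the minimum attainer fact used for conclusion C1
    have hC1aux : ∀ b ∈ P, ∀ k : ℤ, (W b z).val = some k →
        (∀ b' ∈ P, ∀ k' : ℤ, (W b' z).val = some k' → r b + (k : ℝ) ≤ r b' + (k' : ℝ)) →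
        r b + (k : ℝ) = T := by
      intro b hbP k hk hmin
      have hbU : b ∈ Ups := memUps.mpr ⟨hbP, k, hk⟩
      obtain ⟨hb₀P, k₀, h0⟩ := memUps.mp hb₀
      have h1 := hmin b₀ hb₀P k₀ h0
      rw [← huval_eq h0, hTb₀] at h1
      have h2 := Tle b hbU
      rw [huval_eq hk] at h2
      linarith
    by_cases hstrict : ∃ b ∈ Ups, (W b z).strict = true ∧ uval b = T
    · -- some strict constraint attains the minimum: stay strictly below T
      obtain ⟨bs, hbs, hbss, hbsT⟩ := hstrict
      have hLosTs : ∀ a ∈ Los, lval a < T := by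
        intro a ha
        rcases lt_or_eq_of_le (hLosT a ha) with h | h
        · exact h
        · have := (K2 a ha bs hbs (h.trans hbsT.symm)).2
          rw [hbss] at this
          exact Bool.noConfusion this
      have hST : ∀ e ∈ S, e < T := memS_lt.mpr ⟨hΛT, hLosTs⟩
      set t : ℝ := if hSne : S.Nonempty then max ((S.max' hSne + T)/2) (T - 1/2) else T - 1/2
        with ht
      have htT : t < T := by
        rw [ht]
        split
        · rename_i hSne
          have := hST _ (S.max'_mem hSne)
          apply max_lt <;> linarith
        · linarith
      have htS : ∀ e ∈ S, e < t := by
        intro e he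
        rw [ht]
        split
        · rename_i hSne
          have h1 : e ≤ S.max' hSne := Finset.le_max' _ _ he
          have h2 := hST _ (S.max'_mem hSne)
          have : S.max' hSne < (S.max' hSne + T)/2 := by linarith
          exact lt_of_le_of_lt h1 (lt_of_lt_of_le this (le_max_left _ _))
        · exact absurd (Finset.nonempty_of_ne_empty (Finset.ne_empty_of_mem he)) (by assumption)
      have htT2 : T - 1 < t := by
        rw [ht]
        split
        · exact lt_of_lt_of_le (by linarith) (le_max_right _ _)
        · linarith
      refine ⟨t, ?_, ?_, ?_, ?_⟩
      · intro l hl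
        exact htS l (Finset.mem_union_left _ hl)
      · apply main
        · intro b hb
          exact Or.inl (lt_of_lt_of_le htT (Tle b hb))
        · intro a ha
          exact Or.inl (htS _ (Finset.mem_union_right _ (Finset.mem_image_of_mem _ ha)))
      · intro b hbP k hk hmin
        have := hC1aux b hbP k hk hmin
        linarith
      · intro b hbP k hks hk hmin
        obtain ⟨hbsP, ks, hksv⟩ := memUps.mp hbs
        rcases hmin bs hbsP ks hksv with h | ⟨h, hs⟩
        · rw [← huval_eq hksv, hbsT] at h
          have hbU : b ∈ Ups := memUps.mpr ⟨hbP, k, hk⟩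
          have := Tle b hbU
          rw [huval_eq hk] at this
          linarith
        · rw [hbss] at hs
          exact Bool.noConfusion hs
    · -- no strict constraint attains the minimum: we may take t = T
      push_neg at hstrict
      refine ⟨T, hΛT, ?_, ?_, ?_⟩
      · apply main
        · intro b hb
          rcases lt_or_eq_of_le (Tle b hb) with h | h
          · exact Or.inl h
          · right
            refine ⟨le_of_eq h, ?_⟩
            cases hbs : (W b z).strict
            · rfl
            · exact absurd h.symm (hstrict b hb hbs)
        · intro a ha
          rcases lt_or_eq_of_le (hLosT a ha) with h | h
          · exact Or.inl h
          · exact Or.inr ⟨le_of_eq h, (K2 a ha b₀ hb₀ (h.trans hTb₀.symm)).1⟩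
      · intro b hbP k hk hmin
        have := hC1aux b hbP k hk hmin
        linarith
      · intro b hbP k hks hk hmin
        obtain ⟨hb₀P, k₀, h0⟩ := memUps.mp hb₀
        rcases hmin b₀ hb₀P k₀ h0 with h | ⟨h, hs⟩
        · rw [← huval_eq h0, hTb₀] at h
          exact le_of_lt h
        · rw [← huval_eq h0, hTb₀] at h
          exact le_of_eq h
  · -- no upper bounds at all
    have hnoup : ∀ a ∈ P, (W a z).val = none := by
      intro a haP
      rcases hval : (W a z).val with _ | k
      · rfl
      · exact (hUne ⟨a, memUps.mpr ⟨haP, k, hval⟩⟩).elim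
    set t : ℝ := if hSne : S.Nonempty then S.max' hSne + 1 else 0 with ht
    have htS : ∀ e ∈ S, e < t := by
      intro e he
      rw [ht]
      split
      · rename_i hSne
        have := Finset.le_max' S e he
        linarith
      · exact absurd (Finset.nonempty_of_ne_empty (Finset.ne_empty_of_mem he)) (by assumption)
    refine ⟨t, ?_, ?_, ?_, ?_⟩
    · intro l hl
      exact htS l (Finset.mem_union_left _ hl)
    · apply main
      · intro b hb
        obtain ⟨hbP, k, hk⟩ := memUps.mp hb
        rw [hnoup b hbP] at hk
        exact nomatch hk
      · intro a ha
        exact Or.inl (htS _ (Finset.mem_union_right _ (Finset.mem_image_of_mem _ ha)))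
    · intro b hbP k hk _
      rw [hnoup b hbP] at hk
      exact nomatch hk
    · intro b hbP k _ hk _
      rw [hnoup b hbP] at hk
      exact nomatch hk

end Place
/-! ### Completing a partial solution to a full one -/

section Fill

variable {X : Type*} [Fintype X]

lemma fill (W : DGraph X)
    (Htri : ∀ a b c : Vtx X, (W a b).le ((W a c).add (W c b)))
    (Hself : ∀ a, (W a a).sat 0)
    (A : Vtx X → ℝ) :
    ∀ (n : ℕ) (P : Finset (Vtx X)) (r : Vtx X → ℝ),
      (Finset.univ \ P).card ≤ n →
      (∀ a ∈ P, ∀ b ∈ P, (W a b).sat (r b - r a)) →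
      (∀ q, q ∉ P → ∀ a ∈ P, ∀ k : ℤ, (W a q).val = some k → A q < r a + k) →
      ∃ r' : Vtx X → ℝ, (∀ a ∈ P, r' a = r a) ∧ (∀ a b, (W a b).sat (r' b - r' a)) ∧
        (∀ q, q ∉ P → A q < r' q) := by
  intro n
  induction n with
  | zero =>
    intro P r hcard hpair _
    have hPuniv : ∀ a : Vtx X, a ∈ P := by
      intro a
      by_contra ha
      have : a ∈ Finset.univ \ P := Finset.mem_sdiff.mpr ⟨Finset.mem_univ a, ha⟩
      have := Finset.card_pos.mpr ⟨a, this⟩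
      omega
    exact ⟨r, fun a _ => rfl, fun a b => hpair a (hPuniv a) b (hPuniv b),
      fun q hq => absurd (hPuniv q) hq⟩
  | succ n ih =>
    intro P r hcard hpair hinv
    by_cases huniv : ∀ a : Vtx X, a ∈ P
    · exact ⟨r, fun a _ => rfl, fun a b => hpair a (huniv a) b (huniv b),
        fun q hq => absurd (huniv q) hq⟩
    · push_neg at huniv
      obtain ⟨z, hz⟩ := huniv
      classical
      set Λ' : Finset ℝ := ((Finset.univ \ insert z P).filter
          (fun q => ((W z q).val).isSome)).image
          (fun q => A q - ((((W z q).val).getD 0 : ℤ) : ℝ)) with hΛ'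
      have HΛ : ∀ l ∈ insert (A z) Λ', ∀ a ∈ P, ∀ k : ℤ,
          (W a z).val = some k → l < r a + k := by
        intro l hl a haP k hk
        rcases Finset.mem_insert.mp hl with rfl | hl
        · exact hinv z hz a haP k hk
        · obtain ⟨q, hq, rfl⟩ := Finset.mem_image.mp hl
          obtain ⟨hq1, hq2⟩ := Finset.mem_filter.mp hq
          obtain ⟨kq, hkq⟩ := Option.isSome_iff_exists.mp hq2
          have hqP : q ∉ P := fun h =>
            (Finset.mem_sdiff.mp hq1).2 (Finset.mem_insert_of_mem h)
          have htr := Htri a q z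
          have hsum : (W a z).add (W z q)
              = ⟨(W a z).strict || (W z q).strict, some (k + kq)⟩ := by
            unfold Weight.add
            rw [hk, hkq]
            rfl
          rw [hsum] at htr
          obtain ⟨sa, m, haq, hm⟩ := Weight.le_val_le htr
          have := hinv q hqP a haP m (by rw [haq])
          rw [hkq]
          simp only [Option.getD_some]
          have hmk : (m : ℝ) ≤ (k : ℝ) + kq := by exact_mod_cast hm
          linarith
      obtain ⟨t, ht1, ht2, _, _⟩ := place W P r z hpair
        (fun a ha b hb => Htri a b z) (insert (A z) Λ') HΛ
      set r1 : Vtx X → ℝ := Function.update r z t with hr1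
      have hr1P : ∀ a ∈ P, r1 a = r a := by
        intro a ha
        rw [hr1, Function.update_of_ne (by rintro rfl; exact hz ha)]
      have hr1z : r1 z = t := by rw [hr1, Function.update_self]
      have hpair1 : ∀ a ∈ insert z P, ∀ b ∈ insert z P, (W a b).sat (r1 b - r1 a) := by
        intro a ha b hb
        rcases Finset.mem_insert.mp ha with haz | ha
        · rcases Finset.mem_insert.mp hb with hbz | hb
          · rw [haz, hbz, sub_self]; exact Hself z
          · rw [haz, hr1z, hr1P b hb]; exact (ht2 b hb).2
        · rcases Finset.mem_insert.mp hb with hbz | hb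
          · rw [hbz, hr1z, hr1P a ha]; exact (ht2 a ha).1
          · rw [hr1P a ha, hr1P b hb]; exact hpair a ha b hb
      have hinv1 : ∀ q, q ∉ insert z P → ∀ a ∈ insert z P, ∀ k : ℤ,
          (W a q).val = some k → A q < r1 a + k := by
        intro q hq a ha k hk
        rcases Finset.mem_insert.mp ha with haz | ha
        · rw [haz] at hk
          rw [haz, hr1z]
          have hmem : A q - (k : ℝ) ∈ insert (A z) Λ' := by
            apply Finset.mem_insert_of_mem
            rw [hΛ']
            apply Finset.mem_image.mpr
            refine ⟨q, Finset.mem_filter.mpr ⟨Finset.mem_sdiff.mpr ⟨Finset.mem_univ q, hq⟩,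
              Option.isSome_iff_exists.mpr ⟨k, hk⟩⟩, ?_⟩
            rw [hk]
            simp
          have := ht1 _ hmem
          linarith
        · rw [hr1P a ha]
          exact hinv q (fun h => hq (Finset.mem_insert_of_mem h)) a ha k hk
      have hcard1 : (Finset.univ \ insert z P).card ≤ n := by
        have hsub : Finset.univ \ insert z P ⊆ (Finset.univ \ P).erase z := by
          intro a ha
          obtain ⟨h1, h2⟩ := Finset.mem_sdiff.mp ha
          exact Finset.mem_erase.mpr ⟨fun h => h2 (h ▸ Finset.mem_insert_self z P),
            Finset.mem_sdiff.mpr ⟨h1, fun h => h2 (Finset.mem_insert_of_mem h)⟩⟩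
        have hzmem : z ∈ Finset.univ \ P := Finset.mem_sdiff.mpr ⟨Finset.mem_univ z, hz⟩
        have := Finset.card_le_card hsub
        rw [Finset.card_erase_of_mem hzmem] at this
        omega
      obtain ⟨r', hr'1, hr'2, hr'3⟩ := ih (insert z P) r1 hcard1 hpair1 hinv1
      refine ⟨r', ?_, hr'2, ?_⟩
      · intro a ha
        rw [hr'1 a (Finset.mem_insert_of_mem ha), hr1P a ha]
      · intro q hq
        by_cases hqz : q = z
        · subst hqz
          rw [hr'1 q (Finset.mem_insert_self q P), hr1z]
          exact ht1 (A q) (Finset.mem_insert_self _ _)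
        · exact hr'3 q (fun h => (Finset.mem_insert.mp h).elim hqz
            (fun h' => hq h'))

end Fill
/-! ### The hard direction: no witness yields inclusion in the closure -/

section Forward

variable {X : Type*} [Fintype X]

lemma subset_closure (α : X → ℕ) {Z Z' : Set (Val X)}
    {G G' : DGraph X} (hG : IsCanonGraph G Z) (hG' : IsCanonGraph G' Z')
    (hnot : ∀ x y : X,
      ¬ (((G' none (some x)).lt (G none (some x)) ∧
          (G' none (some x)).le (wle (α x : ℤ))) ∨
        ((G' (some x) none).lt (G (some x) none) ∧
          (wle (-(α x : ℤ))).le (G (some x) none)) ∨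
        ((wle (-(α x : ℤ))).le (G (some x) none) ∧
          (G' (some x) (some y)).lt (G (some x) (some y)) ∧
          (G' (some x) (some y)).le ((wle (α y : ℤ)).add (G (some x) none).floor)))) :
    Z ⊆ Closure α Z' := by
  intro v hvZ
  have hvN : Nonneg v := canon_nonneg hG hvZ
  have hsatG : ∀ a b, (G a b).sat (extV v b - extV v a) := canon_sat hG hvZ
  have nc1 : ∀ x : X, ¬ ((G' none (some x)).lt (G none (some x)) ∧
      (G' none (some x)).le (wle (α x : ℤ))) := fun x h => hnot x x (Or.inl h)
  have nc2 : ∀ x : X, ¬ ((G' (some x) none).lt (G (some x) none) ∧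
      (wle (-(α x : ℤ))).le (G (some x) none)) := fun x h => hnot x x (Or.inr (Or.inl h))
  have nc3 : ∀ x y : X, ¬ ((wle (-(α x : ℤ))).le (G (some x) none) ∧
      (G' (some x) (some y)).lt (G (some x) (some y)) ∧
      (G' (some x) (some y)).le ((wle (α y : ℤ)).add (G (some x) none).floor)) :=
    fun x y h => hnot x y (Or.inr (Or.inr h))
  -- For a bounded clock `x`, the weight `(≤,-α x) ≤ G x0` always holds.
  have hbd_le : ∀ x : X, v x ≤ (α x : ℝ) → (wle (-(α x : ℤ))).le (G (some x) none) := by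
    intro x hx
    by_contra hcon
    have hlt := Weight.lt_of_not_le hcon
    obtain ⟨s₀, c, hG0, _⟩ := Weight.le_val_le (canon_z0_le hG x)
    have hsat := hsatG (some x) none
    rw [hG0] at hsat hlt
    rcases Weight.lt_to_nonstrict hlt rfl with h | ⟨h, hs⟩
    · have := Weight.sat_le' (w := (⟨s₀, some c⟩ : Weight)) rfl hsat
      simp only [extV] at this
      have hcr : (c : ℝ) ≤ -(α x : ℝ) - 1 := by
        have : (c : ℝ) ≤ ((-(α x : ℤ) - 1 : ℤ) : ℝ) := by exact_mod_cast (by omega : c ≤ -(α x : ℤ) - 1)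
        push_cast at this
        linarith
      linarith
    · subst h
      have := Weight.sat_lt_of_strict (w := (⟨s₀, some (-(α x : ℤ))⟩ : Weight)) rfl hs hsat
      simp only [extV] at this
      push_cast at this
      linarith
  -- bounded-to-bounded and boundary constraints of `G'` are satisfied by `v` itself
  have F1 : ∀ x : X, v x ≤ (α x : ℝ) → (G' none (some x)).sat (v x) := by
    intro x hx
    rcases not_and_or.mp (nc1 x) with h | h
    · have hle := Weight.le_of_not_lt h
      have := hsatG none (some x)
      simp only [extV, sub_zero] at this
      exact Weight.sat_mono hle this
    · have hlt := Weight.lt_of_not_le h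
      rcases hval : (G' none (some x)).val with _ | c'
      · exact Weight.sat_of_val_none hval _
      · have := Weight.lt_from_nonstrict hlt hval
        apply Weight.sat_of_lt hval
        have : ((α x : ℤ) : ℝ) < c' := by exact_mod_cast this
        push_cast at this ⊢
        linarith
  have F2 : ∀ x : X, v x ≤ (α x : ℝ) → (G' (some x) none).sat (0 - v x) := by
    intro x hx
    rcases not_and_or.mp (nc2 x) with h | h
    · have hle := Weight.le_of_not_lt h
      have := hsatG (some x) none
      simp only [extV] at this
      have h0 : (0:ℝ) - v x = 0 - v x := rfl
      exact Weight.sat_mono hle (by simpa [extV] using hsatG (some x) none)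
    · exact absurd (hbd_le x hx) h
  have F3 : ∀ x y : X, v x ≤ (α x : ℝ) → v y ≤ (α y : ℝ) →
      (G' (some x) (some y)).sat (v y - v x) := by
    intro x y hx hy
    rcases not_and_or.mp (nc3 x y) with h | h
    · exact absurd (hbd_le x hx) h
    rcases not_and_or.mp h with h | h
    · have hle := Weight.le_of_not_lt h
      exact Weight.sat_mono hle (by simpa [extV] using hsatG (some x) (some y))
    · have hlt := Weight.lt_of_not_le h
      obtain ⟨s₀, c, hG0, _⟩ := Weight.le_val_le (canon_z0_le hG x)
      have hsat0 := hsatG (some x) none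
      rw [hG0] at hsat0
      simp only [extV] at hsat0
      rcases hval : (G' (some x) (some y)).val with _ | c'
      · exact Weight.sat_of_val_none hval _
      apply Weight.sat_of_lt hval
      cases hs₀ : s₀
      · -- `G x0` nonstrict : `v x ≥ -c`
        subst hs₀
        have hfl : (wle (α y : ℤ)).add (G (some x) none).floor = ⟨false, some ((α y : ℤ) + c)⟩ := by
          rw [hG0]
          rfl
        rw [hfl] at hlt
        have hc' := Weight.lt_from_nonstrict hlt hval
        have hvx : -(c : ℝ) ≤ v x := by
          have := Weight.sat_le' (w := (⟨false, some c⟩ : Weight)) rfl hsat0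
          linarith
        have : ((α y : ℤ) + c : ℝ) < c' := by exact_mod_cast hc'
        push_cast at this ⊢
        linarith
      · -- `G x0` strict : `v x > -c`
        subst hs₀
        have hfl : (wle (α y : ℤ)).add (G (some x) none).floor
            = ⟨false, some ((α y : ℤ) + (c - 1))⟩ := by
          rw [hG0]
          rfl
        rw [hfl] at hlt
        have hc' := Weight.lt_from_nonstrict hlt hval
        have hvx : -(c : ℝ) < v x := by
          have := Weight.sat_lt_of_strict (w := (⟨true, some c⟩ : Weight)) rfl rfl hsat0
          linarith
        have : ((α y : ℤ) + c : ℝ) ≤ c' := by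
          exact_mod_cast (by omega : (α y : ℤ) + c ≤ c')
        push_cast at this ⊢
        linarith
  -- the invariant bounds for unbounded clocks
  have F4 : ∀ q : X, (α q : ℝ) < v q → ∀ k : ℤ, (G' none (some q)).val = some k →
      (α q : ℝ) < 0 + k := by
    intro q hq k hk
    rcases not_and_or.mp (nc1 q) with h | h
    · have hle := Weight.le_of_not_lt h
      rw [Weight.eq_mk_of_val hk] at hle
      obtain ⟨s, m, hG0q, hm⟩ := Weight.le_val_le hle
      have := hsatG none (some q)
      rw [hG0q] at this
      have := Weight.sat_le' rfl this
      simp only [extV, sub_zero] at this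
      have hmk : (m : ℝ) ≤ k := by exact_mod_cast hm
      linarith
    · have hlt := Weight.lt_of_not_le h
      have := Weight.lt_from_nonstrict hlt hk
      have : ((α q : ℤ) : ℝ) < k := by exact_mod_cast this
      push_cast at this
      linarith
  have F5 : ∀ y q : X, v y ≤ (α y : ℝ) → (α q : ℝ) < v q →
      ∀ k : ℤ, (G' (some y) (some q)).val = some k → (α q : ℝ) < v y + k := by
    intro y q hy hq k hk
    rcases not_and_or.mp (nc3 y q) with h | h
    · exact absurd (hbd_le y hy) h
    rcases not_and_or.mp h with h | h
    · have hle := Weight.le_of_not_lt h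
      rw [Weight.eq_mk_of_val hk] at hle
      obtain ⟨s, m, hGyq, hm⟩ := Weight.le_val_le hle
      have := hsatG (some y) (some q)
      rw [hGyq] at this
      have := Weight.sat_le' rfl this
      simp only [extV] at this
      have hmk : (m : ℝ) ≤ k := by exact_mod_cast hm
      linarith
    · have hlt := Weight.lt_of_not_le h
      obtain ⟨s₀, c, hGy0, _⟩ := Weight.le_val_le (canon_z0_le hG y)
      have hsat0 := hsatG (some y) none
      rw [hGy0] at hsat0
      simp only [extV] at hsat0
      cases hs₀ : s₀
      · subst hs₀
        have hfl : (wle (α q : ℤ)).add (G (some y) none).floor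
            = ⟨false, some ((α q : ℤ) + c)⟩ := by rw [hGy0]; rfl
        rw [hfl] at hlt
        have hc' := Weight.lt_from_nonstrict hlt hk
        have hvy : -(c : ℝ) ≤ v y := by
          have := Weight.sat_le' (w := (⟨false, some c⟩ : Weight)) rfl hsat0
          linarith
        have : ((α q : ℤ) + c : ℝ) < k := by exact_mod_cast hc'
        push_cast at this
        linarith
      · subst hs₀
        have hfl : (wle (α q : ℤ)).add (G (some y) none).floor
            = ⟨false, some ((α q : ℤ) + (c - 1))⟩ := by rw [hGy0]; rfl
        rw [hfl] at hlt
        have hc' := Weight.lt_from_nonstrict hlt hk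
        have hvy : -(c : ℝ) < v y := by
          have := Weight.sat_lt_of_strict (w := (⟨true, some c⟩ : Weight)) rfl rfl hsat0
          linarith
        have : ((α q : ℤ) + c : ℝ) ≤ k := by
          exact_mod_cast (by omega : (α q : ℤ) + c ≤ k)
        push_cast at this
        linarith
  -- set up and run the completion
  classical
  set P₀ : Finset (Vtx X) :=
    insert none ((Finset.univ.filter (fun zc : X => v zc ≤ (α zc : ℝ))).image some) with hP₀
  have memP₀ : ∀ a : Vtx X, a ∈ P₀ ↔ a = none ∨ ∃ zc : X, a = some zc ∧ v zc ≤ (α zc : ℝ) := by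
    intro a
    rw [hP₀]
    simp only [Finset.mem_insert, Finset.mem_image, Finset.mem_filter, Finset.mem_univ,
      true_and]
    constructor
    · rintro (rfl | ⟨zc, hzc, rfl⟩)
      · exact Or.inl rfl
      · exact Or.inr ⟨zc, rfl, hzc⟩
    · rintro (rfl | ⟨zc, rfl, hzc⟩)
      · exact Or.inl rfl
      · exact Or.inr ⟨zc, hzc, rfl⟩
  set A : Vtx X → ℝ := fun q => match q with | none => 0 | some zc => (α zc : ℝ) with hA
  have hpair₀ : ∀ a ∈ P₀, ∀ b ∈ P₀, (G' a b).sat (extV v b - extV v a) := by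
    intro a ha b hb
    rcases (memP₀ a).mp ha with rfl | ⟨x, rfl, hx⟩
    · rcases (memP₀ b).mp hb with rfl | ⟨y, rfl, hy⟩
      · rw [sub_self]; exact canon_diag hG' none
      · simpa [extV] using F1 y hy
    · rcases (memP₀ b).mp hb with rfl | ⟨y, rfl, hy⟩
      · simpa [extV] using F2 x hx
      · simpa [extV] using F3 x y hx hy
  have hinv₀ : ∀ q, q ∉ P₀ → ∀ a ∈ P₀, ∀ k : ℤ, (G' a q).val = some k →
      A q < extV v a + k := by
    intro q hq a ha k hk
    have hqs : ∃ zc : X, q = some zc ∧ (α zc : ℝ) < v zc := by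
      rcases q with _ | zc
      · exact absurd ((memP₀ none).mpr (Or.inl rfl)) hq
      · refine ⟨zc, rfl, ?_⟩
        by_contra hcon
        push_neg at hcon
        exact hq ((memP₀ (some zc)).mpr (Or.inr ⟨zc, rfl, hcon⟩))
    obtain ⟨zc, rfl, hzc⟩ := hqs
    rcases (memP₀ a).mp ha with rfl | ⟨y, rfl, hy⟩
    · simpa [extV, hA] using F4 zc hzc k hk
    · simpa [extV, hA] using F5 y zc hy hzc k hk
  obtain ⟨r', hr'P, hr'sat, hr'A⟩ := fill G' (canon_tri hG') (canon_diag hG') A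
    (Finset.univ \ P₀).card P₀ (extV v) le_rfl hpair₀ hinv₀
  have hr'none : r' none = 0 := by
    have := hr'P none ((memP₀ none).mpr (Or.inl rfl))
    simpa [extV] using this
  set u : Val X := fun zc => r' (some zc) with hu
  have hextu : ∀ a : Vtx X, extV u a = r' a := by
    intro a
    rcases a with _ | zc
    · simp [extV, hr'none]
    · rfl
  have hubd : ∀ zc : X, v zc ≤ (α zc : ℝ) → u zc = v zc := by
    intro zc h
    have := hr'P (some zc) ((memP₀ (some zc)).mpr (Or.inr ⟨zc, rfl, h⟩))
    simpa [extV, hu] using this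
  have huunbd : ∀ zc : X, (α zc : ℝ) < v zc → (α zc : ℝ) < u zc := by
    intro zc h
    have hq : some zc ∉ P₀ := by
      intro hmem
      rcases (memP₀ (some zc)).mp hmem with h' | ⟨y, hy, hy'⟩
      · exact nomatch h'
      · have : zc = y := Option.some.injEq .. ▸ hy
        subst this
        linarith
    have := hr'A (some zc) hq
    simpa [hA, hu] using this
  have huN : Nonneg u := by
    intro zc
    by_cases h : v zc ≤ (α zc : ℝ)
    · rw [hubd zc h]; exact hvN zc
    · push_neg at h
      have := huunbd zc h
      have hα : (0:ℝ) ≤ (α zc : ℝ) := Nat.cast_nonneg _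
      linarith
  have huZ' : u ∈ Z' := by
    rw [← hG'.1]
    refine ⟨huN, ?_⟩
    intro a b
    rw [hextu a, hextu b]
    exact hr'sat a b
  have hreg : regEq α v u := by
    constructor
    · intro x
      by_cases h : v x ≤ (α x : ℝ)
      · rw [hubd x h]
        exact Or.inr ⟨rfl, Iff.rfl⟩
      · push_neg at h
        exact Or.inl ⟨h, huunbd x h⟩
    · intro x y hx hy
      rw [hubd x hx, hubd y hy]
  exact (mem_Closure_iff hvN).mpr ⟨u, huZ', huN, hreg⟩

end Forward
/-! ### The easy direction: witnesses yield non-inclusion (cases 1 and 2) -/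

section Backward12

variable {X : Type*} [Fintype X]

lemma not_subset_of_violator {α : X → ℕ} {Z Z' : Set (Val X)}
    {v : Val X} (hvZ : v ∈ Z) (hvN : Nonneg v)
    (hviol : ∀ u : Val X, Nonneg u → regEq α v u → u ∈ Z' → False) :
    ¬ Z ⊆ Closure α Z' := by
  intro hsub
  obtain ⟨u, huZ', huN, hreg⟩ := (mem_Closure_iff hvN).mp (hsub hvZ)
  exact hviol u huN hreg huZ'

lemma case1 (α : X → ℕ) {Z Z' : Set (Val X)}
    {G G' : DGraph X} (hG : IsCanonGraph G Z) (hG' : IsCanonGraph G' Z') {x : X}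
    (h1 : (G' none (some x)).lt (G none (some x)))
    (h2 : (G' none (some x)).le (wle (α x : ℤ))) :
    ¬ Z ⊆ Closure α Z' := by
  obtain ⟨s', c', hw, hc'⟩ := Weight.le_val_le h2
  have hval : (G' none (some x)).val = some c' := by rw [hw]
  have hstr : (G' none (some x)).strict = s' := by rw [hw]
  obtain ⟨v, hvZ, hns⟩ := canon_violator hG h1
  have hvN : Nonneg v := canon_nonneg hG hvZ
  simp only [extV, sub_zero] at hns
  apply not_subset_of_violator hvZ hvN
  intro u huN hreg huZ'
  have hsatu := canon_sat hG' huZ' none (some x)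
  simp only [extV, sub_zero] at hsatu
  by_cases hbd : v x ≤ (α x : ℝ)
  · have hubd : u x ≤ (α x : ℝ) := regEq_bd hreg hbd
    have hT := regEq_T1 (regEq_symm hreg) hubd c'
    cases hs : s'
    · rw [hs] at hstr
      have h := Weight.sat_le' hval hsatu
      rcases lt_or_eq_of_le h with h | h
      · exact absurd (hT.1 h) (by
          have := Weight.not_sat_nonstrict hval hstr hns
          linarith)
      · exact absurd (hT.2 (le_of_eq h)) (by
          have := Weight.not_sat_nonstrict hval hstr hns
          linarith)
    · rw [hs] at hstr
      have h := Weight.sat_lt_of_strict hval hstr hsatu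
      exact absurd (hT.1 h) (by
        have := Weight.not_sat_strict hval hstr hns
        linarith)
  · push_neg at hbd
    have hub : (α x : ℝ) < u x := regEq_above hreg hbd
    have h := Weight.sat_le' hval hsatu
    have hcr : (c' : ℝ) ≤ (α x : ℝ) := by exact_mod_cast hc'
    linarith

lemma case2 (α : X → ℕ) {Z Z' : Set (Val X)}
    {G G' : DGraph X} (hG : IsCanonGraph G Z) (hG' : IsCanonGraph G' Z') {x : X}
    (h1 : (G' (some x) none).lt (G (some x) none))
    (h2 : (wle (-(α x : ℤ))).le (G (some x) none)) :
    ¬ Z ⊆ Closure α Z' := by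
  obtain ⟨s₀, c, hG0⟩ := canon_z0_finite hG x
  obtain ⟨s', c', hw, hc'⟩ := Weight.lt_val_some h1 (by rw [hG0])
  have hval : (G' (some x) none).val = some c' := by rw [hw]
  have hstr : (G' (some x) none).strict = s' := by rw [hw]
  have hwlt : (wlt (-(α x : ℤ))).lt (G (some x) none) := by
    apply Weight.lt_of_lt_of_le _ h2
    exact Or.inr ⟨rfl, rfl, rfl⟩
  have hmaxlt : (Weight.max (G' (some x) none) (wlt (-(α x : ℤ)))).lt (G (some x) none) :=
    Weight.max_lt_of h1 hwlt
  obtain ⟨v, hvZ, hns⟩ := canon_violator hG hmaxlt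
  have hvN : Nonneg v := canon_nonneg hG hvZ
  simp only [extV] at hns
  have hns1 : ¬ (G' (some x) none).sat (0 - v x) := fun h =>
    hns (Weight.sat_mono (Weight.le_max_left _ _) h)
  have hns2 : ¬ (wlt (-(α x : ℤ))).sat (0 - v x) := fun h =>
    hns (Weight.sat_mono (Weight.le_max_right _ _) h)
  have hbd : v x ≤ (α x : ℝ) := by
    have := Weight.not_sat_strict (w := wlt (-(α x : ℤ))) rfl rfl hns2
    push_cast at this
    linarith
  apply not_subset_of_violator hvZ hvN
  intro u huN hreg huZ'
  have hsatu := canon_sat hG' huZ' (some x) none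
  simp only [extV] at hsatu
  have hT := regEq_T1 hreg hbd (-c')
  cases hs : s'
  · rw [hs] at hstr
    have h := Weight.not_sat_nonstrict hval hstr hns1
    have hvx : v x < ((-c' : ℤ) : ℝ) := by push_cast; linarith
    have := hT.1 hvx
    have hu := Weight.sat_le' hval hsatu
    push_cast at this
    linarith
  · rw [hs] at hstr
    have h := Weight.not_sat_strict hval hstr hns1
    have hvx : v x ≤ ((-c' : ℤ) : ℝ) := by push_cast; linarith
    have := hT.2 hvx
    have hu := Weight.sat_lt_of_strict hval hstr hsatu
    push_cast at this
    linarith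

end Backward12
/-! ### The easy direction, case 3 -/

section Backward3

variable {X : Type*} [Fintype X]

lemma case3 (α : X → ℕ) {Z Z' : Set (Val X)}
    {G G' : DGraph X} (hG : IsCanonGraph G Z) (hG' : IsCanonGraph G' Z') {x y : X}
    (h2 : (wle (-(α x : ℤ))).le (G (some x) none))
    (h3 : (G' (some x) (some y)).lt (G (some x) (some y)))
    (h4 : (G' (some x) (some y)).le ((wle (α y : ℤ)).add (G (some x) none).floor)) :
    ¬ Z ⊆ Closure α Z' := by
  classical
  by_cases hxy : x = y
  · -- degenerate case: `x = y` contradicts nonemptiness of `Z'`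
    exfalso
    subst hxy
    have hdle : (G (some x) (some x)).le (wle 0) := by
      apply hG.2
      intro v hv
      rw [sub_self]
      show Weight.sat ⟨false, some 0⟩ 0
      rw [Weight.sat_some]
      norm_num
    have hlt0 : (G' (some x) (some x)).lt (wle 0) := Weight.lt_of_lt_of_le h3 hdle
    obtain ⟨sa, m, hww, hm⟩ := Weight.lt_val_some hlt0 rfl
    have hval : (G' (some x) (some x)).val = some m := by rw [hww]
    have hsat := canon_diag hG' (some x)
    rcases Weight.lt_to_nonstrict hlt0 hval with h | ⟨h, hs⟩
    · have := Weight.sat_le' hval hsat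
      have : (0:ℝ) ≤ (m:ℝ) := this
      have hm0 : (m:ℝ) < 0 := by exact_mod_cast h
      linarith
    · have := Weight.sat_lt_of_strict hval hs hsat
      subst h
      norm_num at this
  -- main case : `x ≠ y`
  obtain ⟨s₀, c, hG0⟩ := canon_z0_finite hG x
  have hG0v : (G (some x) none).val = some c := by rw [hG0]
  have hG0s : (G (some x) none).strict = s₀ := by rw [hG0]
  -- `G' x y` is finite
  obtain ⟨c', hvalG'⟩ : ∃ c' : ℤ, (G' (some x) (some y)).val = some c' := by
    rcases hv' : (G' (some x) (some y)).val with _ | c'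
    · exfalso
      rcases h3 with hlt | ⟨he, _, hs2⟩
      · rw [hv'] at hlt
        exact hlt
      · rw [hv'] at he
        have := canon_inf_strict hG he.symm
        rw [this] at hs2
        exact Bool.noConfusion hs2
    · exact ⟨c', rfl⟩
  -- the floor of `G x0`
  obtain ⟨f, hfl, hf1, hfex, hfstr⟩ :
      ∃ f : ℤ, (G (some x) none).floor = ⟨false, some f⟩ ∧ ((c:ℝ) - 1 ≤ (f:ℝ)) ∧
        (s₀ = false → f = c) ∧ (s₀ = true → f = c - 1) := by
    cases hs : s₀
    · refine ⟨c, ?_, by norm_num, fun _ => rfl, fun h => Bool.noConfusion h⟩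
      rw [hG0]
      unfold Weight.floor
      rw [hs]
      rfl
    · refine ⟨c - 1, ?_, by push_cast; norm_num, fun h => Bool.noConfusion h, fun _ => rfl⟩
      rw [hG0]
      unfold Weight.floor
      rw [hs]
      rfl
  -- `-α x ≤ f`
  have hαf : -(α x : ℤ) ≤ f := by
    obtain ⟨sa, m, heqw, hcases⟩ := Weight.le_finite_cases (s := s₀) (n := c) (by
      rw [← hG0]; exact h2)
    have hsa : sa = false := by
      have : (wle (-(α x : ℤ))).strict = sa := by rw [heqw]
      exact this.symm
    have hma : m = -(α x : ℤ) := by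
      have : (wle (-(α x : ℤ))).val = some m := by rw [heqw]
      simpa [wle] using this.symm
    subst hsa; subst hma
    rcases hcases with h | ⟨h, hs, _⟩ | ⟨h, hs⟩
    · cases hss : s₀
      · rw [hfex hss]; omega
      · rw [hfstr hss]; omega
    · exact Bool.noConfusion hs
    · rw [hfex hs.symm]; omega
  -- `c' ≤ α y + f`
  have hc'αyf : c' ≤ (α y : ℤ) + f := by
    rw [hfl] at h4
    have hadd : (wle (α y : ℤ)).add ⟨false, some f⟩ = ⟨false, some ((α y : ℤ) + f)⟩ := rfl
    rw [hadd] at h4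
    obtain ⟨sa, m, hw, hm⟩ := Weight.le_val_le h4
    have : (G' (some x) (some y)).val = some m := by rw [hw]
    rw [hvalG'] at this
    injection this with h
    omega
  -- Step 1 : place `x₀` tightly against `x`
  have hpair1 : ∀ a ∈ ({some x} : Finset (Vtx X)), ∀ b ∈ ({some x} : Finset (Vtx X)),
      (G a b).sat ((fun _ => (0:ℝ)) b - (fun _ => (0:ℝ)) a) := by
    intro a ha b hb
    rw [Finset.mem_singleton] at ha hb
    rw [ha, hb]
    simpa using canon_diag hG (some x)
  obtain ⟨t₀, _, hsat₀, hC1₀, hC2₀⟩ := place G {some x} (fun _ => 0) none hpair1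
    (fun a _ b _ => canon_tri hG a b none) ∅ (fun l hl => absurd hl (Finset.notMem_empty l))
  have hsx := hsat₀ (some x) (Finset.mem_singleton_self _)
  have hsat_x0 : (G (some x) none).sat (t₀ - 0) := hsx.1
  have hsat_0x : (G none (some x)).sat (0 - t₀) := hsx.2
  have ht₀c : t₀ ≤ (c:ℝ) := by
    have := Weight.sat_le' hG0v hsat_x0
    linarith
  have ht₀lb : (c:ℝ) - 1 < t₀ := by
    have := hC1₀ (some x) (Finset.mem_singleton_self _) c hG0v ?_
    · linarith
    · intro b' hb' k' hk'
      rw [Finset.mem_singleton] at hb'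
      subst hb'
      rw [hG0v] at hk'
      injection hk' with h
      subst h
      exact le_refl _
  have ht₀ex : s₀ = false → t₀ = (c:ℝ) := by
    intro hs
    refine le_antisymm ht₀c ?_
    have := hC2₀ (some x) (Finset.mem_singleton_self _) c (by rw [hG0s]; exact hs) hG0v ?_
    · linarith
    · intro b' hb' k' hk'
      rw [Finset.mem_singleton] at hb'
      subst hb'
      rw [hG0v] at hk'
      injection hk' with h
      subst h
      exact Or.inr ⟨rfl, by rw [hG0s]; exact hs⟩
  -- Step 2 : place `y` tightly against `x` (and compatibly with `x₀`)
  set P₂ : Finset (Vtx X) := {some x, none} with hP₂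
  set r₂ : Vtx X → ℝ := fun a => if a = none then t₀ else 0 with hr₂
  have hr₂x : r₂ (some x) = 0 := by rw [hr₂]; simp
  have hr₂0 : r₂ none = t₀ := by rw [hr₂]; simp
  have hmem₂ : ∀ a : Vtx X, a ∈ P₂ ↔ a = some x ∨ a = none := by
    intro a
    rw [hP₂]
    simp [Finset.mem_insert, Finset.mem_singleton]
  have hpair₂ : ∀ a ∈ P₂, ∀ b ∈ P₂, (G a b).sat (r₂ b - r₂ a) := by
    intro a ha b hb
    rcases (hmem₂ a).mp ha with rfl | rfl <;> rcases (hmem₂ b).mp hb with rfl | rfl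
    · rw [sub_self]; exact canon_diag hG _
    · rw [hr₂x, hr₂0]; exact hsat_x0
    · rw [hr₂x, hr₂0]; exact hsat_0x
    · rw [sub_self]; exact canon_diag hG _
  -- the triangle inequality `G x y ≤ G x 0 + G 0 y` in explicit form
  have htri_xy0 : ∀ k : ℤ, (G none (some y)).val = some k →
      ∃ (sxy : Bool) (m : ℤ), G (some x) (some y) = ⟨sxy, some m⟩ ∧
        (m < c + k ∨ (m = c + k ∧ sxy = true ∧ (s₀ || (G none (some y)).strict) = false) ∨
          (m = c + k ∧ sxy = (s₀ || (G none (some y)).strict))) := by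
    intro k hk
    have htr := canon_tri hG (some x) (some y) none
    have hsum : (G (some x) none).add (G none (some y))
        = ⟨s₀ || (G none (some y)).strict, some (c + k)⟩ := by
      unfold Weight.add
      rw [hG0v, hG0s, hk]
      rfl
    rw [hsum] at htr
    exact Weight.le_finite_cases htr
  obtain ⟨t₁, hsat₁, hstr⟩ :
      ∃ t₁ : ℝ, (∀ a ∈ P₂, (G a (some y)).sat (t₁ - r₂ a) ∧ (G (some y) a).sat (r₂ a - t₁)) ∧
        ((c' : ℝ) < t₁ ∨ ((c' : ℝ) ≤ t₁ ∧ (G' (some x) (some y)).strict = true)) := by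
    rcases h3 with hovlt | ⟨hveq, hstrG', hstrG⟩
    · -- branch A : strict value inequality
      rw [hvalG'] at hovlt
      have HΛ : ∀ l ∈ ({(c':ℝ)} : Finset ℝ), ∀ a ∈ P₂, ∀ k : ℤ,
          (G a (some y)).val = some k → l < r₂ a + k := by
        intro l hl a ha k hk
        rw [Finset.mem_singleton] at hl
        subst hl
        rcases (hmem₂ a).mp ha with rfl | rfl
        · rw [hk] at hovlt
          have : c' < k := hovlt
          rw [hr₂x]
          have : (c' : ℝ) < k := by exact_mod_cast this
          linarith
        · obtain ⟨sxy, m, hGxy, hcases⟩ := htri_xy0 k hk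
          have hm : m ≤ c + k := by rcases hcases with h | ⟨h, _⟩ | ⟨h, _⟩ <;> omega
          have hc'm : c' < m := by
            rw [hGxy] at hovlt
            exact hovlt
          have : (c' : ℝ) ≤ (c : ℝ) + k - 1 := by
            exact_mod_cast (by omega : c' ≤ c + k - 1)
          rw [hr₂0]
          linarith
      obtain ⟨t₁, hΛ₁, hs₁, _, _⟩ := place G P₂ r₂ (some y) hpair₂
        (fun a _ b _ => canon_tri hG a b (some y)) {(c':ℝ)} HΛ
      exact ⟨t₁, hs₁, Or.inl (hΛ₁ _ (Finset.mem_singleton_self _))⟩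
    · -- branch B : equal values, `G'` strict, `G` nonstrict
      have hGv : (G (some x) (some y)).val = some c' := by rw [← hveq]; exact hvalG'
      have hGxy : G (some x) (some y) = ⟨false, some c'⟩ := by
        have := Weight.eq_mk_of_val hGv
        rw [hstrG] at this
        exact this
      obtain ⟨t₁, _, hs₁, _, hC2₁⟩ := place G P₂ r₂ (some y) hpair₂
        (fun a _ b _ => canon_tri hG a b (some y)) ∅
        (fun l hl => absurd hl (Finset.notMem_empty l))
      refine ⟨t₁, hs₁, Or.inr ⟨?_, hstrG'⟩⟩
      have hxP₂ : some x ∈ P₂ := (hmem₂ _).mpr (Or.inl rfl)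
      have := hC2₁ (some x) hxP₂ c' (by rw [hGxy]) hGv ?_
      · rw [hr₂x] at this
        linarith
      · intro b' hb' k' hk'
        rcases (hmem₂ b').mp hb' with rfl | rfl
        · rw [hGv] at hk'
          injection hk' with h
          subst h
          exact Or.inr ⟨rfl, by rw [hGxy]⟩
        · obtain ⟨sxy, m, hGxy', hcases⟩ := htri_xy0 k' hk'
          have hmc' : m = c' ∧ sxy = false := by
            rw [hGxy] at hGxy'
            injection hGxy' with h1 h2
            injection h2 with h2
            exact ⟨h2.symm, h1.symm⟩
          obtain ⟨hmc, hsxy⟩ := hmc'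
          subst hmc
          rcases hcases with h | ⟨h, hs, _⟩ | ⟨h, hs⟩
          · left
            rw [hr₂x, hr₂0]
            have : (m : ℝ) ≤ (c:ℝ) + k' - 1 := by exact_mod_cast (by omega : m ≤ c + k' - 1)
            linarith
          · rw [hsxy] at hs
            exact Bool.noConfusion hs
          · have hor : s₀ = false ∧ (G none (some y)).strict = false := by
              rw [hsxy] at hs
              exact Bool.or_eq_false_iff.mp hs.symm
            right
            constructor
            · rw [hr₂x, hr₂0, ht₀ex hor.1]
              have : (m : ℝ) = (c:ℝ) + k' := by exact_mod_cast h
              linarith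
            · exact hor.2
  -- Step 3 : complete to a full valuation
  set P₃ : Finset (Vtx X) := insert (some y) P₂ with hP₃
  set r₃ : Vtx X → ℝ := Function.update r₂ (some y) t₁ with hr₃
  have hyP₂ : some y ∉ P₂ := by
    intro h
    rcases (hmem₂ _).mp h with h | h
    · exact hxy (Option.some.injEq .. ▸ h).symm
    · exact nomatch h
  have hr₃y : r₃ (some y) = t₁ := by rw [hr₃, Function.update_self]
  have hr₃P₂ : ∀ a ∈ P₂, r₃ a = r₂ a := by
    intro a ha
    rw [hr₃, Function.update_of_ne (by rintro rfl; exact hyP₂ ha)]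
  have hpair₃ : ∀ a ∈ P₃, ∀ b ∈ P₃, (G a b).sat (r₃ b - r₃ a) := by
    intro a ha b hb
    rcases Finset.mem_insert.mp ha with hay | haP
    · rcases Finset.mem_insert.mp hb with hby | hbP
      · rw [hay, hby, sub_self]; exact canon_diag hG _
      · rw [hay, hr₃y, hr₃P₂ b hbP]
        exact (hsat₁ b hbP).2
    · rcases Finset.mem_insert.mp hb with hby | hbP
      · rw [hby, hr₃y, hr₃P₂ a haP]
        exact (hsat₁ a haP).1
      · rw [hr₃P₂ a haP, hr₃P₂ b hbP]
        exact hpair₂ a haP b hbP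
  set A : Vtx X → ℝ := fun q =>
    min ((G (some x) q).val.elim 0 (fun k => r₃ (some x) + (k:ℝ)))
      (min ((G none q).val.elim 0 (fun k => r₃ none + (k:ℝ)))
        ((G (some y) q).val.elim 0 (fun k => r₃ (some y) + (k:ℝ)))) - 1 with hA
  have hinv₃ : ∀ q, q ∉ P₃ → ∀ a ∈ P₃, ∀ k : ℤ, (G a q).val = some k →
      A q < r₃ a + k := by
    intro q _ a ha k hk
    have key : A q ≤ (G a q).val.elim 0 (fun k => r₃ a + (k:ℝ)) - 1 := by
      rcases Finset.mem_insert.mp ha with rfl | haP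
      · simp only [hA]
        have := min_le_right
          ((G (some x) q).val.elim 0 (fun k => r₃ (some x) + (k:ℝ)))
          (min ((G none q).val.elim 0 (fun k => r₃ none + (k:ℝ)))
            ((G (some y) q).val.elim 0 (fun k => r₃ (some y) + (k:ℝ))))
        have h2 := min_le_right
          ((G none q).val.elim 0 (fun k => r₃ none + (k:ℝ)))
          ((G (some y) q).val.elim 0 (fun k => r₃ (some y) + (k:ℝ)))
        linarith
      · rcases (hmem₂ a).mp haP with rfl | rfl
        · simp only [hA]
          have := min_le_left
            ((G (some x) q).val.elim 0 (fun k => r₃ (some x) + (k:ℝ)))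
            (min ((G none q).val.elim 0 (fun k => r₃ none + (k:ℝ)))
              ((G (some y) q).val.elim 0 (fun k => r₃ (some y) + (k:ℝ))))
          linarith
        · simp only [hA]
          have := min_le_right
            ((G (some x) q).val.elim 0 (fun k => r₃ (some x) + (k:ℝ)))
            (min ((G none q).val.elim 0 (fun k => r₃ none + (k:ℝ)))
              ((G (some y) q).val.elim 0 (fun k => r₃ (some y) + (k:ℝ))))
          have h2 := min_le_left
            ((G none q).val.elim 0 (fun k => r₃ none + (k:ℝ)))
            ((G (some y) q).val.elim 0 (fun k => r₃ (some y) + (k:ℝ)))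
          linarith
    rw [hk] at key
    simp only [Option.elim] at key
    linarith
  obtain ⟨r', hr'P, hr'sat, _⟩ := fill G (canon_tri hG) (canon_diag hG) A
    (Finset.univ \ P₃).card P₃ r₃ le_rfl hpair₃ hinv₃
  have hr'x : r' (some x) = 0 := by
    rw [hr'P (some x) (Finset.mem_insert_of_mem ((hmem₂ _).mpr (Or.inl rfl))),
      hr₃P₂ (some x) ((hmem₂ _).mpr (Or.inl rfl)), hr₂x]
  have hr'0 : r' none = t₀ := by
    rw [hr'P none (Finset.mem_insert_of_mem ((hmem₂ _).mpr (Or.inr rfl))),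
      hr₃P₂ none ((hmem₂ _).mpr (Or.inr rfl)), hr₂0]
  have hr'y : r' (some y) = t₁ := by
    rw [hr'P (some y) (Finset.mem_insert_self _ _), hr₃y]
  set v : Val X := fun zc => r' (some zc) - r' none with hv
  have hdiff : ∀ a b : Vtx X, extV v b - extV v a = r' b - r' a := by
    intro a b
    rcases a with _ | za <;> rcases b with _ | zb <;> simp [extV, hv] <;> ring
  have hvN : Nonneg v := by
    intro zc
    have hs := Weight.sat_mono (canon_z0_le hG zc) (hr'sat (some zc) none)
    have := Weight.sat_le' (w := wle 0) rfl hs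
    rw [hv]
    simp only
    push_cast at this
    linarith
  have hvZ : v ∈ Z := by
    rw [← hG.1]
    refine ⟨hvN, fun a b => ?_⟩
    rw [hdiff a b]
    exact hr'sat a b
  have hvx : v x = -t₀ := by rw [hv]; simp [hr'x, hr'0]
  have hvyx : v y - v x = t₁ := by rw [hv]; simp [hr'x, hr'0, hr'y]
  have hvxf : v x ≤ -(f:ℝ) := by
    cases hs : s₀
    · rw [hvx, ht₀ex hs, hfex hs]
    · rw [hvx]
      have : (f:ℝ) = (c:ℝ) - 1 := by rw [hfstr hs]; push_cast; ring
      linarith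
  have hvxα : v x ≤ (α x : ℝ) := by
    have : (-(f:ℤ) : ℝ) ≤ ((α x : ℤ) : ℝ) := by exact_mod_cast (by omega : -f ≤ (α x : ℤ))
    push_cast at this
    linarith
  -- conclude : the region of `v` avoids `Z'`
  apply not_subset_of_violator hvZ hvN
  intro u huN hreg huZ'
  have hsatu := canon_sat hG' huZ' (some x) (some y)
  simp only [extV] at hsatu
  by_cases hy : v y ≤ (α y : ℝ)
  · have hux : u x ≤ (α x : ℝ) := regEq_bd hreg hvxα
    have huy : u y ≤ (α y : ℝ) := regEq_bd hreg hy
    have hT := regEq_T2 (regEq_symm hreg) hux huy c'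
    rcases hstr with hstr | ⟨hstr, hs'⟩
    · have h := Weight.sat_le' hvalG' hsatu
      have := hT.2 h
      rw [hvyx] at this
      linarith
    · have h := Weight.sat_lt_of_strict hvalG' hs' hsatu
      have := hT.1 h
      rw [hvyx] at this
      linarith
  · push_neg at hy
    have huy : (α y : ℝ) < u y := regEq_above hreg hy
    have hux : u x ≤ ((-f : ℤ) : ℝ) := (regEq_T1 hreg hvxα (-f)).2 (by push_cast; linarith)
    have h := Weight.sat_le' hvalG' hsatu
    have hca : (c' : ℝ) ≤ (α y : ℝ) + (f : ℝ) := by exact_mod_cast hc'αyf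
    push_cast at hux
    linarith

end Backward3
/-- `Z ⊄ Closure_α(Z')` iff one of the three edge conditions holds
for some clocks `x, y` (both different from `x₀`). -/
theorem stmt3 {X : Type*} [Fintype X] (α : X → ℕ) (Z Z' : Set (Val X))
    (hZ : IsZone Z) (hZ' : IsZone Z')
    (G G' : DGraph X) (hG : IsCanonGraph G Z) (hG' : IsCanonGraph G' Z') :
    ¬ (Z ⊆ Closure α Z') ↔
      ∃ x y : X,
        ((G' none (some x)).lt (G none (some x)) ∧
          (G' none (some x)).le (wle (α x : ℤ))) ∨
        ((G' (some x) none).lt (G (some x) none) ∧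
          (wle (-(α x : ℤ))).le (G (some x) none)) ∨
        ((wle (-(α x : ℤ))).le (G (some x) none) ∧
          (G' (some x) (some y)).lt (G (some x) (some y)) ∧
          (G' (some x) (some y)).le ((wle (α y : ℤ)).add (G (some x) none).floor)) := by
  constructor
  · intro hns
    by_contra hnot
    exact hns (subset_closure α hG hG' (fun x y h => hnot ⟨x, y, h⟩))
  · rintro ⟨x, y, h | h | h⟩
    · exact case1 α hG hG' h.1 h.2
    · exact case2 α hG hG' h.1 h.2
    · exact case3 α hG hG' h.1 h.2.1 h.2.2

end TAform

end
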